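/- arXiv:2007.14115 — 3 statements merged into one kernel-verified Lean document; each statement's English description precedes it below -/
import Mathlib

section
/- Let s, t, α be positive integers with 2 ≤ α, α < s and α < t, and let G be a finite abelian group with line set 𝓛 making (G,𝓛) a proper partial geometry pg(s,t,α) admitting G as an abelian Singer group, such that the pair is of rigid type (axioms (i)–(vi) of the encoding). Then s < (α+1)² − 1. -/
set_option linter.unusedSectionVars false

/-- Encoding of a partial geometry `pg(s,t,α)` whose point set is the abelian group `G`,
admitting `G` (acting by translation) as an abelian Singer group; the lines are the finite
subsets of `G` collected in `𝓛`.  Axioms (i)–(v). -/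
structure IsPGSinger (G : Type*) [CommGroup G] [DecidableEq G]
    (𝓛 : Set (Finset G)) (s t α : ℕ) : Prop where
  /-- (i) every line has exactly `s+1` points -/
  line_card : ∀ L ∈ 𝓛, L.card = s + 1
  /-- (ii) every point lies on exactly `t+1` lines -/
  point_deg : ∀ x : G, {L | L ∈ 𝓛 ∧ x ∈ L}.ncard = t + 1
  /-- (iii) two distinct lines share at most one point -/
  line_inter : ∀ L ∈ 𝓛, ∀ M ∈ 𝓛, L ≠ M → ((L : Set G) ∩ (M : Set G)).ncard ≤ 1
  /-- (iv) for a non-incident point–line pair `(x,L)`, exactly `α` lines through `x` meet `L` -/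
  alpha_ax : ∀ x : G, ∀ L ∈ 𝓛, x ∉ L →
    {M | M ∈ 𝓛 ∧ x ∈ M ∧ ∃ y ∈ L, y ∈ M}.ncard = α
  /-- (v) the line set is closed under translation by elements of `G` -/
  translate : ∀ g : G, ∀ L ∈ 𝓛, L.image (fun y => g * y) ∈ 𝓛

/-- (vi) The pair `(S,G)` is of rigid type: every line has trivial stabilizer in `G`. -/
def RigidType (G : Type*) [CommGroup G] [DecidableEq G] (𝓛 : Set (Finset G)) : Prop :=
  ∀ g : G, ∀ L ∈ 𝓛, L.image (fun y => g * y) = L → g = 1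

section MatLem

open Polynomial Matrix

/-- Evaluating the characteristic polynomial gives the determinant of `r•1 - M`. -/
theorem eval_charpoly_eq {n : Type*} [Fintype n] [DecidableEq n] {K : Type*} [CommRing K]
    (M : Matrix n n K) (r : K) :
    (M.charpoly).eval r = (Matrix.scalar n r - M).det := by
  rw [Matrix.charpoly, _root_.eval_det, Matrix.matPolyEquiv_charmatrix]
  simp

/-- Key divisibility: if `A·A = c•A` and `B` commutes with `A` (integer matrices),
then `c` divides `tr(A·B)`. -/
theorem dvd_trace_of_idem {n : Type*} [Fintype n] [DecidableEq n] [Nonempty n]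
    (A B : Matrix n n ℤ) (c : ℤ) (hc : c ≠ 0)
    (hA : A * A = c • A) (hAB : A * B = B * A) : c ∣ (A * B).trace := by
  classical
  set f : ℤ →+* ℂ := Int.castRingHom ℂ with hf
  set A' : Matrix n n ℂ := A.map f with hA'
  set B' : Matrix n n ℂ := B.map f with hB'
  set N : Matrix n n ℂ := A' * B' with hN
  clear_value N
  have hmapsmul : (c • A).map f = (c : ℂ) • A' := by
    ext i j
    simp only [hA', hf, Matrix.map_apply, Matrix.smul_apply, smul_eq_mul,
      Int.coe_castRingHom]
    push_cast
    ring
  have hAA' : A' * A' = (c : ℂ) • A' := by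
    rw [hA', ← Matrix.map_mul, hA, hmapsmul]
  have hABcomm' : A' * B' = B' * A' := by
    rw [hA', hB', ← Matrix.map_mul, ← Matrix.map_mul, hAB]
  -- each root λ of charpoly N has λ/c integral over ℤ
  have key : ∀ lam ∈ N.charpoly.roots, IsIntegral ℤ (lam / (c : ℂ)) := by
    intro lam hlam
    rcases eq_or_ne lam 0 with rfl | hlam0
    · simpa using isIntegral_zero
    -- eigenvector
    have hdet : (Matrix.scalar n lam - N).det = 0 := by
      rw [← eval_charpoly_eq]
      exact (Polynomial.isRoot_of_mem_roots hlam)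
    obtain ⟨x, hx0, hx⟩ := (Matrix.exists_mulVec_eq_zero_iff).mpr hdet
    have hscalar : ∀ (r : ℂ) (v : n → ℂ), (Matrix.scalar n r).mulVec v = r • v := by
      intro r v
      funext i
      simp [Matrix.scalar_apply, Matrix.mulVec_diagonal, Pi.smul_apply, smul_eq_mul]
    have hNx : N.mulVec x = lam • x := by
      have := hx
      rw [Matrix.sub_mulVec, hscalar, sub_eq_zero] at this
      exact this.symm
    -- A'.mulVec x = c • x
    have hAN : A' * N = (c : ℂ) • N := by
      rw [hN, ← mul_assoc, hAA', Matrix.smul_mul]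
    have hAx : A'.mulVec x = (c : ℂ) • x := by
      have h1 : A'.mulVec (N.mulVec x) = lam • (A'.mulVec x) := by
        rw [hNx, Matrix.mulVec_smul]
      have h2 : A'.mulVec (N.mulVec x) = (c : ℂ) • (lam • x) := by
        rw [Matrix.mulVec_mulVec, hAN, Matrix.smul_mulVec, hNx]
      have h3 : lam • (A'.mulVec x) = lam • ((c : ℂ) • x) := by
        rw [← h1, h2, smul_comm]
      exact smul_right_injective _ hlam0 h3
    -- B'.mulVec x = (lam/c) • x
    have hcC : (c : ℂ) ≠ 0 := by
      exact_mod_cast hc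
    have hBx : B'.mulVec x = (lam / (c : ℂ)) • x := by
      have h1 : (c : ℂ) • (B'.mulVec x) = lam • x := by
        rw [← Matrix.mulVec_smul, ← hAx, Matrix.mulVec_mulVec, ← hABcomm', ← hN, hNx]
      have h2 := congrArg (fun v => (c : ℂ)⁻¹ • v) h1
      simp only [smul_smul, inv_mul_cancel₀ hcC, one_smul] at h2
      rw [h2, div_eq_inv_mul]
    -- (lam/c) is a root of charpoly B'
    have hdetB : (Matrix.scalar n (lam / (c : ℂ)) - B').det = 0 := by
      rw [← Matrix.exists_mulVec_eq_zero_iff]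
      refine ⟨x, hx0, ?_⟩
      rw [Matrix.sub_mulVec, hscalar, hBx, sub_self]
    have hroot : (B'.charpoly).eval (lam / (c : ℂ)) = 0 := by
      rw [eval_charpoly_eq]
      exact hdetB
    -- integrality
    refine ⟨B.charpoly, B.charpoly_monic, ?_⟩
    have hmap : B'.charpoly = (B.charpoly).map f := by
      rw [hB', Matrix.charpoly_map]
    rw [Polynomial.eval₂_eq_eval_map]
    have : algebraMap ℤ ℂ = f := by
      ext m
      simp [hf]
    rw [this, ← hmap]
    exact hroot
  -- sum of roots
  have htr : N.trace = N.charpoly.roots.sum := Matrix.trace_eq_sum_roots_charpoly N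
  have htrmap : N.trace = (((A * B).trace : ℤ) : ℂ) := by
    rw [hN, hA', hB', ← Matrix.map_mul]
    simp [Matrix.trace, Matrix.map_apply, Matrix.diag]
  have hsumdiv : (N.charpoly.roots.map (fun lam => lam / (c : ℂ))).sum
      = N.charpoly.roots.sum / (c : ℂ) := by
    induction N.charpoly.roots using Multiset.induction_on with
    | empty => simp
    | cons a s ih =>
      simp only [Multiset.map_cons, Multiset.sum_cons, ih, add_div]
  have hint : IsIntegral ℤ ((((A * B).trace : ℤ) : ℂ) / (c : ℂ)) := by
    rw [← htrmap, htr, ← hsumdiv]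
    refine IsIntegral.multiset_sum ?_
    intro y hy
    rw [Multiset.mem_map] at hy
    obtain ⟨lam, hlam, rfl⟩ := hy
    exact key lam hlam
  -- descend to ℚ then ℤ
  have hcQ : ((c : ℚ) : ℂ) = (c : ℂ) := by push_cast; ring
  have halg : (algebraMap ℚ ℂ) (((A * B).trace : ℚ) / (c : ℚ)) = (((A * B).trace : ℤ) : ℂ) / (c : ℂ) := by
    push_cast
    norm_cast
  have hintQ : IsIntegral ℤ (((A * B).trace : ℚ) / (c : ℚ)) := by
    rw [← isIntegral_algebraMap_iff (algebraMap ℚ ℂ).injective]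
    rw [halg]
    exact hint
  obtain ⟨y, hy⟩ := IsIntegrallyClosed.isIntegral_iff.mp hintQ
  refine ⟨y, ?_⟩
  have hcQ0 : (c : ℚ) ≠ 0 := by exact_mod_cast hc
  have hy' : (y : ℚ) = ((A * B).trace : ℚ) / (c : ℚ) := by exact_mod_cast hy
  rw [eq_div_iff hcQ0] at hy'
  have : ((A * B).trace : ℚ) = (c : ℚ) * (y : ℚ) := by rw [← hy']; ring
  exact_mod_cast this

end MatLem

open Finset

section AuxPG

open scoped Classical

variable {G : Type*} [CommGroup G] [Fintype G] [DecidableEq G]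

/-- Collinearity of two (distinct) points. -/
def PGCol (𝓛 : Set (Finset G)) (x y : G) : Prop :=
  x ≠ y ∧ ∃ L ∈ 𝓛, x ∈ L ∧ y ∈ L

theorem PGCol.symm {𝓛 : Set (Finset G)} {x y : G} (h : PGCol 𝓛 x y) : PGCol 𝓛 y x := by
  obtain ⟨hne, L, hL, hx, hy⟩ := h
  exact ⟨hne.symm, L, hL, hy, hx⟩

theorem PGCol.ne {𝓛 : Set (Finset G)} {x y : G} (h : PGCol 𝓛 x y) : x ≠ y := h.1

variable {𝓛 : Set (Finset G)} {s t α : ℕ}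

/-- Lines through a point, as a Finset. -/
noncomputable def linesThrough (𝓛 : Set (Finset G)) (x : G) : Finset (Finset G) :=
  Finset.univ.filter (fun L => L ∈ 𝓛 ∧ x ∈ L)

theorem mem_linesThrough {x : G} {L : Finset G} :
    L ∈ linesThrough 𝓛 x ↔ L ∈ 𝓛 ∧ x ∈ L := by
  simp [linesThrough]

theorem linesThrough_card (hpg : IsPGSinger G 𝓛 s t α) (x : G) :
    (linesThrough 𝓛 x).card = t + 1 := by
  have h := hpg.point_deg x
  have : {L | L ∈ 𝓛 ∧ x ∈ L} = ↑(linesThrough 𝓛 x) := by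
    ext L; simp [linesThrough]
  rw [this, Set.ncard_coe_finset] at h
  exact h

/-- Two distinct lines share at most one point. -/
theorem unique_inter (hpg : IsPGSinger G 𝓛 s t α) {L M : Finset G}
    (hL : L ∈ 𝓛) (hM : M ∈ 𝓛) (hne : L ≠ M) {x y : G}
    (hxL : x ∈ L) (hxM : x ∈ M) (hyL : y ∈ L) (hyM : y ∈ M) : x = y := by
  have h := hpg.line_inter L hL M hM hne
  have hset : ((L : Set G) ∩ (M : Set G)) = ↑(L ∩ M) := by
    simp [Finset.coe_inter]
  rw [hset, Set.ncard_coe_finset] at h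
  have := Finset.card_le_one.mp h
  exact this x (Finset.mem_inter.mpr ⟨hxL, hxM⟩) y (Finset.mem_inter.mpr ⟨hyL, hyM⟩)

/-- Two distinct points lie on at most one common line. -/
theorem unique_line (hpg : IsPGSinger G 𝓛 s t α) {x y : G} (hxy : x ≠ y)
    {L M : Finset G} (hL : L ∈ 𝓛) (hM : M ∈ 𝓛)
    (hxL : x ∈ L) (hyL : y ∈ L) (hxM : x ∈ M) (hyM : y ∈ M) : L = M := by
  by_contra hne
  exact hxy (unique_inter hpg hL hM hne hxL hxM hyL hyM)

theorem col_translate (hpg : IsPGSinger G 𝓛 s t α) (g : G) {x y : G}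
    (h : PGCol 𝓛 x y) : PGCol 𝓛 (g * x) (g * y) := by
  obtain ⟨hne, L, hL, hx, hy⟩ := h
  refine ⟨by simpa using hne, L.image (fun z => g * z), hpg.translate g L hL, ?_, ?_⟩
  · exact Finset.mem_image_of_mem _ hx
  · exact Finset.mem_image_of_mem _ hy

theorem col_translate_iff (hpg : IsPGSinger G 𝓛 s t α) (g : G) {x y : G} :
    PGCol 𝓛 (g * x) (g * y) ↔ PGCol 𝓛 x y := by
  constructor
  · intro h
    have := col_translate hpg g⁻¹ h
    simpa [inv_mul_cancel_left] using this
  · exact col_translate hpg g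

/-- Point `x` off line `L` is collinear with exactly `α` points of `L`. -/
theorem seen_card (hpg : IsPGSinger G 𝓛 s t α) {L : Finset G} (hL : L ∈ 𝓛)
    {x : G} (hx : x ∉ L) : (L.filter (fun z => PGCol 𝓛 x z)).card = α := by
  classical
  set Meets : Finset (Finset G) :=
    Finset.univ.filter (fun M => M ∈ 𝓛 ∧ x ∈ M ∧ ∃ y ∈ L, y ∈ M) with hMeets
  have memM : ∀ {M : Finset G}, M ∈ Meets ↔ (M ∈ 𝓛 ∧ x ∈ M ∧ ∃ y ∈ L, y ∈ M) := by
    intro M; simp [hMeets]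
  have hMcard : Meets.card = α := by
    have h := hpg.alpha_ax x L hL hx
    have : {M | M ∈ 𝓛 ∧ x ∈ M ∧ ∃ y ∈ L, y ∈ M} = ↑Meets := by
      ext M; simp [hMeets]
    rw [this, Set.ncard_coe_finset] at h
    exact h
  rw [← hMcard]
  have key : ∀ M ∈ Meets, ∃ z, z ∈ L ∧ z ∈ M ∧ ∀ w, w ∈ L → w ∈ M → w = z := by
    intro M hM
    obtain ⟨hM𝓛, hxM, y, hyL, hyM⟩ := memM.mp hM
    refine ⟨y, hyL, hyM, ?_⟩
    intro w hwL hwM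
    have hne : L ≠ M := by
      rintro rfl; exact hx hxM
    exact unique_inter hpg hL hM𝓛 hne hwL hwM hyL hyM
  refine (Finset.card_bij (fun M hM => Classical.choose (key M hM)) ?_ ?_ ?_).symm
  · intro M hM
    obtain ⟨hzL, hzM, -⟩ := Classical.choose_spec (key M hM)
    refine Finset.mem_filter.mpr ⟨hzL, ?_, M, (memM.mp hM).1, (memM.mp hM).2.1, hzM⟩
    intro h; rw [← h] at hzL; exact hx hzL
  · intro M₁ hM₁ M₂ hM₂ heq
    obtain ⟨hz₁L, hz₁M, -⟩ := Classical.choose_spec (key M₁ hM₁)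
    obtain ⟨hz₂L, hz₂M, -⟩ := Classical.choose_spec (key M₂ hM₂)
    rw [heq] at hz₁M hz₁L
    have hxz : x ≠ Classical.choose (key M₂ hM₂) := by
      rintro h; rw [← h] at hz₂L; exact hx hz₂L
    exact unique_line hpg hxz (memM.mp hM₁).1 (memM.mp hM₂).1
      (memM.mp hM₁).2.1 hz₁M (memM.mp hM₂).2.1 hz₂M
  · intro z hz
    rw [Finset.mem_filter] at hz
    obtain ⟨hzL, hxz, M, hM𝓛, hxM, hzM⟩ := hz
    have hMmem : M ∈ Meets := memM.mpr ⟨hM𝓛, hxM, z, hzL, hzM⟩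
    refine ⟨M, hMmem, ?_⟩
    obtain ⟨hz'L, hz'M, huniq⟩ := Classical.choose_spec (key M hMmem)
    exact (huniq z hzL hzM).symm

theorem exists_line_through_one (hpg : IsPGSinger G 𝓛 s t α) :
    ∃ L ∈ 𝓛, (1 : G) ∈ L := by
  have h := linesThrough_card (G := G) hpg (1 : G)
  have : (linesThrough 𝓛 (1 : G)).Nonempty := by
    rw [← Finset.card_pos, h]; omega
  obtain ⟨L, hL⟩ := this
  exact ⟨L, (mem_linesThrough.mp hL).1, (mem_linesThrough.mp hL).2⟩

/-- Lines through a common point have pairwise disjoint complements of that point. -/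
theorem erase_disjoint (hpg : IsPGSinger G 𝓛 s t α) {x : G} :
    ∀ L ∈ linesThrough 𝓛 x, ∀ M ∈ linesThrough 𝓛 x, L ≠ M →
      Disjoint (L.erase x) (M.erase x) := by
  intro L hL M hM hne
  rw [Finset.disjoint_left]
  intro z hzL hzM
  obtain ⟨hzx, hzL'⟩ := Finset.mem_erase.mp hzL
  obtain ⟨-, hzM'⟩ := Finset.mem_erase.mp hzM
  exact hzx (unique_inter hpg (mem_linesThrough.mp hL).1 (mem_linesThrough.mp hM).1 hne
    hzL' hzM' (mem_linesThrough.mp hL).2 (mem_linesThrough.mp hM).2)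

/-- The number of points collinear with `1` is `s * (t+1)`. -/
theorem theta_card (hpg : IsPGSinger G 𝓛 s t α) :
    (Finset.univ.filter (fun h : G => PGCol 𝓛 1 h)).card = s * (t + 1) := by
  classical
  have hset : Finset.univ.filter (fun h : G => PGCol 𝓛 1 h) =
      (linesThrough 𝓛 1).biUnion (fun L => L.erase 1) := by
    ext h
    simp only [Finset.mem_filter, Finset.mem_univ, true_and, Finset.mem_biUnion,
      mem_linesThrough, Finset.mem_erase]
    constructor
    · rintro ⟨hne, L, hL, h1L, hhL⟩
      exact ⟨L, ⟨hL, h1L⟩, Ne.symm hne, hhL⟩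
    · rintro ⟨L, ⟨hL, h1L⟩, hne, hhL⟩
      exact ⟨Ne.symm hne, L, hL, h1L, hhL⟩
  rw [hset, Finset.card_biUnion (erase_disjoint hpg)]
  have : ∀ L ∈ linesThrough 𝓛 1, (L.erase 1).card = s := by
    intro L hL
    rw [Finset.card_erase_of_mem (mem_linesThrough.mp hL).2,
      hpg.line_card L (mem_linesThrough.mp hL).1]
    omega
  rw [Finset.sum_congr rfl this, Finset.sum_const, linesThrough_card hpg, smul_eq_mul,
    mul_comm]

/-- Common neighbours of `1` and `g` (excluding the two points themselves). -/
noncomputable def CNfin (𝓛 : Set (Finset G)) (g : G) : Finset G :=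
  Finset.univ.filter (fun h => h ≠ 1 ∧ h ≠ g ∧ PGCol 𝓛 1 h ∧ PGCol 𝓛 h g)

/-- μ-count: for `g` non-collinear with `1`, there are `α(t+1)` common neighbours. -/
theorem CN_ncol (hpg : IsPGSinger G 𝓛 s t α) {g : G} (hg1 : g ≠ 1)
    (hng : ¬ PGCol 𝓛 1 g) : (CNfin 𝓛 g).card = α * (t + 1) := by
  classical
  have hgnotL : ∀ L ∈ linesThrough 𝓛 1, g ∉ L := by
    intro L hL hgL
    exact hng ⟨Ne.symm hg1, L, (mem_linesThrough.mp hL).1, (mem_linesThrough.mp hL).2, hgL⟩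
  have hset : CNfin 𝓛 g =
      (linesThrough 𝓛 1).biUnion (fun L => L.filter (fun z => PGCol 𝓛 g z)) := by
    ext h
    simp only [CNfin, Finset.mem_filter, Finset.mem_univ, true_and, Finset.mem_biUnion,
      mem_linesThrough]
    constructor
    · rintro ⟨h1, hgne, ⟨-, L, hL, h1L, hhL⟩, hcol⟩
      exact ⟨L, ⟨hL, h1L⟩, hhL, hcol.symm⟩
    · rintro ⟨L, ⟨hL, h1L⟩, hhL, hcol⟩
      have hne1 : h ≠ 1 := by
        rintro rfl
        exact hng hcol.symm
      exact ⟨hne1, (hcol.ne).symm, ⟨Ne.symm hne1, L, hL, h1L, hhL⟩, hcol.symm⟩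
  have hdisj : ∀ L ∈ linesThrough 𝓛 1, ∀ M ∈ linesThrough 𝓛 1, L ≠ M →
      Disjoint (L.filter (fun z => PGCol 𝓛 g z)) (M.filter (fun z => PGCol 𝓛 g z)) := by
    intro L hL M hM hne
    rw [Finset.disjoint_left]
    intro z hzL hzM
    have hz1 : z ≠ 1 := by
      rintro rfl
      exact hng ((Finset.mem_filter.mp hzL).2.symm)
    exact hz1 (unique_inter hpg (mem_linesThrough.mp hL).1 (mem_linesThrough.mp hM).1 hne
      (Finset.mem_filter.mp hzL).1 (Finset.mem_filter.mp hzM).1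
      (mem_linesThrough.mp hL).2 (mem_linesThrough.mp hM).2)
  rw [hset, Finset.card_biUnion hdisj]
  have : ∀ L ∈ linesThrough 𝓛 1, (L.filter (fun z => PGCol 𝓛 g z)).card = α := by
    intro L hL
    exact seen_card hpg (mem_linesThrough.mp hL).1 (hgnotL L hL)
  rw [Finset.sum_congr rfl this, Finset.sum_const, linesThrough_card hpg, smul_eq_mul,
    mul_comm]

/-- λ-count: for `g` collinear with `1`, there are `s-1+t(α-1)` common neighbours. -/
theorem CN_col (hpg : IsPGSinger G 𝓛 s t α) {g : G} (hg : PGCol 𝓛 1 g) :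
    (CNfin 𝓛 g).card = s - 1 + t * (α - 1) := by
  classical
  obtain ⟨hg1, L₀, hL₀, h1L₀, hgL₀⟩ := hg
  have hL₀T : L₀ ∈ linesThrough 𝓛 1 := mem_linesThrough.mpr ⟨hL₀, h1L₀⟩
  have huniq : ∀ L ∈ linesThrough 𝓛 1, g ∈ L → L = L₀ := by
    intro L hL hgL
    exact unique_line hpg hg1 (mem_linesThrough.mp hL).1 hL₀
      (mem_linesThrough.mp hL).2 hgL h1L₀ hgL₀
  set A : Finset G := (L₀.erase 1).erase g with hA
  set B : Finset G := ((linesThrough 𝓛 1).erase L₀).biUnion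
      (fun L => (L.filter (fun z => PGCol 𝓛 g z)).erase 1) with hB
  have hset : CNfin 𝓛 g = A ∪ B := by
    ext h
    simp only [CNfin, Finset.mem_filter, Finset.mem_univ, true_and, hA, hB,
      Finset.mem_union, Finset.mem_erase, Finset.mem_biUnion]
    constructor
    · rintro ⟨h1, hgne, ⟨-, L, hL, h1L, hhL⟩, hcol⟩
      have hLT : L ∈ linesThrough 𝓛 1 := mem_linesThrough.mpr ⟨hL, h1L⟩
      by_cases hLL₀ : L = L₀
      · subst hLL₀
        exact Or.inl ⟨hgne, h1, hhL⟩
      · refine Or.inr ⟨L, ⟨?_, hLT⟩, h1, hhL, hcol.symm⟩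
        exact hLL₀
    · rintro (⟨hgne, h1, hhL₀⟩ | ⟨L, ⟨hLne, hLT⟩, h1, hhL, hcol⟩)
      · exact ⟨h1, hgne, ⟨Ne.symm h1, L₀, hL₀, h1L₀, hhL₀⟩, hgne, L₀, hL₀, hhL₀, hgL₀⟩
      · refine ⟨h1, Ne.symm hcol.ne, ⟨Ne.symm h1, L, (mem_linesThrough.mp hLT).1,
          (mem_linesThrough.mp hLT).2, hhL⟩, hcol.symm⟩
  have hdisjAB : Disjoint A B := by
    rw [Finset.disjoint_left]
    intro z hzA hzB
    obtain ⟨hzg, hz1, hzL₀⟩ := by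
      simpa [hA, Finset.mem_erase] using hzA
    rw [hB, Finset.mem_biUnion] at hzB
    obtain ⟨L, hLT', hzL⟩ := hzB
    obtain ⟨hLne, hLT⟩ := Finset.mem_erase.mp hLT'
    obtain ⟨hz1', hzmem⟩ := Finset.mem_erase.mp hzL
    have := unique_inter hpg (mem_linesThrough.mp hLT).1 hL₀ (by exact hLne)
      (Finset.mem_filter.mp hzmem).1 hzL₀ (mem_linesThrough.mp hLT).2 h1L₀
    exact hz1 this
  have hcardA : A.card = s - 1 := by
    have h1 : (L₀.erase 1).card = s := by
      rw [Finset.card_erase_of_mem h1L₀, hpg.line_card L₀ hL₀]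
      omega
    have hgmem : g ∈ L₀.erase 1 := Finset.mem_erase.mpr ⟨Ne.symm hg1, hgL₀⟩
    rw [hA, Finset.card_erase_of_mem hgmem, h1]
  have hcardB : B.card = t * (α - 1) := by
    have hdisj : ∀ L ∈ (linesThrough 𝓛 1).erase L₀, ∀ M ∈ (linesThrough 𝓛 1).erase L₀,
        L ≠ M → Disjoint ((L.filter (fun z => PGCol 𝓛 g z)).erase 1)
          ((M.filter (fun z => PGCol 𝓛 g z)).erase 1) := by
      intro L hL M hM hne
      rw [Finset.disjoint_left]
      intro z hzL hzM
      obtain ⟨hz1, hzL'⟩ := Finset.mem_erase.mp hzL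
      obtain ⟨-, hzM'⟩ := Finset.mem_erase.mp hzM
      exact hz1 (unique_inter hpg
        (mem_linesThrough.mp (Finset.mem_erase.mp hL).2).1
        (mem_linesThrough.mp (Finset.mem_erase.mp hM).2).1 hne
        (Finset.mem_filter.mp hzL').1 (Finset.mem_filter.mp hzM').1
        (mem_linesThrough.mp (Finset.mem_erase.mp hL).2).2
        (mem_linesThrough.mp (Finset.mem_erase.mp hM).2).2)
    rw [hB, Finset.card_biUnion hdisj]
    have heach : ∀ L ∈ (linesThrough 𝓛 1).erase L₀,
        ((L.filter (fun z => PGCol 𝓛 g z)).erase 1).card = α - 1 := by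
      intro L hL'
      obtain ⟨hLne, hLT⟩ := Finset.mem_erase.mp hL'
      have hgL : g ∉ L := by
        intro hgL
        exact hLne (huniq L hLT hgL)
      have hfil : (L.filter (fun z => PGCol 𝓛 g z)).card = α :=
        seen_card hpg (mem_linesThrough.mp hLT).1 hgL
      have h1mem : (1 : G) ∈ L.filter (fun z => PGCol 𝓛 g z) :=
        Finset.mem_filter.mpr ⟨(mem_linesThrough.mp hLT).2,
          ⟨hg1.symm, L₀, hL₀, hgL₀, h1L₀⟩⟩
      rw [Finset.card_erase_of_mem h1mem, hfil]
    rw [Finset.sum_congr rfl heach, Finset.sum_const,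
      Finset.card_erase_of_mem hL₀T, linesThrough_card hpg, smul_eq_mul]
    simp [mul_comm]
  rw [hset, Finset.card_union_of_disjoint hdisjAB, hcardA, hcardB]

/-- The order formula `α·v = (s+1)(st+α)`. -/
theorem v_formula (hpg : IsPGSinger G 𝓛 s t α) (hα : 0 < α) :
    α * Fintype.card G = (s + 1) * (s * t + α) := by
  classical
  obtain ⟨L₀, hL₀, h1L₀⟩ := exists_line_through_one hpg
  set S : Finset G := Finset.univ.filter (fun x => x ∉ L₀) with hS
  -- first count
  have count1 : ∑ x ∈ S, (L₀.filter (fun z => PGCol 𝓛 x z)).card = α * S.card := by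
    have : ∀ x ∈ S, (L₀.filter (fun z => PGCol 𝓛 x z)).card = α := by
      intro x hx
      exact seen_card hpg hL₀ (Finset.mem_filter.mp hx).2
    rw [Finset.sum_congr rfl this, Finset.sum_const, smul_eq_mul, mul_comm]
  -- second count, swapping the order of summation
  have swap : ∑ x ∈ S, (L₀.filter (fun z => PGCol 𝓛 x z)).card
      = ∑ z ∈ L₀, (S.filter (fun x => PGCol 𝓛 x z)).card := by
    simp only [Finset.card_filter]
    exact Finset.sum_comm
  have count2 : ∀ z ∈ L₀, (S.filter (fun x => PGCol 𝓛 x z)).card = t * s := by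
    intro z hz
    have hL₀z : L₀ ∈ linesThrough 𝓛 z := mem_linesThrough.mpr ⟨hL₀, hz⟩
    have hset : S.filter (fun x => PGCol 𝓛 x z) =
        ((linesThrough 𝓛 z).erase L₀).biUnion (fun L => L.erase z) := by
      ext x
      simp only [hS, Finset.mem_filter, Finset.mem_univ, true_and, Finset.mem_biUnion,
        Finset.mem_erase, mem_linesThrough]
      constructor
      · rintro ⟨hxL₀, hxz, L, hL, hxL, hzL⟩
        refine ⟨L, ⟨?_, hL, hzL⟩, hxz, hxL⟩
        rintro rfl; exact hxL₀ hxL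
      · rintro ⟨L, ⟨hLne, hL, hzL⟩, hxz, hxL⟩
        have hxL₀ : x ∉ L₀ := by
          intro hxL₀
          exact hLne (unique_line hpg hxz hL hL₀ hxL hzL hxL₀ hz)
        exact ⟨hxL₀, hxz, L, hL, hxL, hzL⟩
    have hdisj : ∀ L ∈ (linesThrough 𝓛 z).erase L₀, ∀ M ∈ (linesThrough 𝓛 z).erase L₀,
        L ≠ M → Disjoint (L.erase z) (M.erase z) := by
      intro L hL M hM hne
      exact erase_disjoint hpg L (Finset.mem_erase.mp hL).2 M (Finset.mem_erase.mp hM).2 hne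
    rw [hset, Finset.card_biUnion hdisj]
    have heach : ∀ L ∈ (linesThrough 𝓛 z).erase L₀, (L.erase z).card = s := by
      intro L hL
      have hLT := (Finset.mem_erase.mp hL).2
      rw [Finset.card_erase_of_mem (mem_linesThrough.mp hLT).2,
        hpg.line_card L (mem_linesThrough.mp hLT).1]
      omega
    rw [Finset.sum_congr rfl heach, Finset.sum_const, Finset.card_erase_of_mem hL₀z,
      linesThrough_card hpg, smul_eq_mul]
    simp
  -- combine
  have key : α * S.card = (s + 1) * (t * s) := by
    rw [← count1, swap, Finset.sum_congr rfl count2, Finset.sum_const, smul_eq_mul,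
      hpg.line_card L₀ hL₀]
  have hScard : S.card = Fintype.card G - (s + 1) := by
    rw [hS]
    have : Finset.univ.filter (fun x : G => x ∉ L₀) = Finset.univ \ L₀ := by
      ext x; simp
    rw [this, Finset.card_sdiff_of_subset (Finset.subset_univ _), hpg.line_card L₀ hL₀,
      Finset.card_univ]
  have hle : s + 1 ≤ Fintype.card G := by
    rw [← hpg.line_card L₀ hL₀, ← Finset.card_univ]
    exact Finset.card_le_card (Finset.subset_univ _)
  rw [hScard] at key
  have : α * Fintype.card G = α * (Fintype.card G - (s + 1)) + α * (s + 1) := by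
    rw [← Nat.mul_add, Nat.sub_add_cancel hle]
  rw [this, key]
  ring

theorem image_image_mul (L : Finset G) (a b : G) :
    (L.image (fun y => a * y)).image (fun y => b * y) = L.image (fun y => (b * a) * y) := by
  rw [Finset.image_image]
  congr 1
  funext y
  simp [mul_assoc]

/-- Rigidity: a line determines its translating element. -/
theorem translate_inj (hrig : RigidType G 𝓛) {L : Finset G} (hL : L ∈ 𝓛) {g g' : G}
    (h : L.image (fun y => g * y) = L.image (fun y => g' * y)) : g = g' := by
  have h2 := congrArg (Finset.image (fun y => g'⁻¹ * y)) h
  rw [image_image_mul, image_image_mul] at h2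
  have h3 : L.image (fun y => (g'⁻¹ * g') * y) = L := by
    simp
  rw [h3] at h2
  have := hrig (g'⁻¹ * g) L hL h2
  rwa [inv_mul_eq_one, eq_comm] at this

/-- The class of a line through `1` inside the pencil at `1`. -/
noncomputable def lineClass (L : Finset G) : Finset (Finset G) :=
  L.image (fun y => L.image (fun z => y⁻¹ * z))

theorem lineClass_card (hpg : IsPGSinger G 𝓛 s t α) (hrig : RigidType G 𝓛)
    {L : Finset G} (hL : L ∈ 𝓛) : (lineClass L).card = s + 1 := by
  rw [lineClass, Finset.card_image_of_injOn, hpg.line_card L hL]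
  intro y _ w _ h
  have := translate_inj hrig hL h
  rwa [inv_inj] at this

theorem lineClass_subset (hpg : IsPGSinger G 𝓛 s t α) {L : Finset G}
    (hL : L ∈ linesThrough 𝓛 1) : lineClass L ⊆ linesThrough 𝓛 1 := by
  intro M hM
  rw [lineClass, Finset.mem_image] at hM
  obtain ⟨y, hy, rfl⟩ := hM
  refine mem_linesThrough.mpr ⟨hpg.translate y⁻¹ L (mem_linesThrough.mp hL).1, ?_⟩
  exact Finset.mem_image.mpr ⟨y, hy, inv_mul_cancel y⟩

theorem mem_lineClass_of_translate (hpg : IsPGSinger G 𝓛 s t α) {L M : Finset G}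
    (hM : M ∈ linesThrough 𝓛 1) (g : G) (h : M = L.image (fun y => g * y)) :
    M ∈ lineClass L := by
  have h1M := (mem_linesThrough.mp hM).2
  rw [h, Finset.mem_image] at h1M
  obtain ⟨l, hl, hgl⟩ := h1M
  have : g = l⁻¹ := by
    rw [eq_inv_iff_mul_eq_one]
    exact hgl
  rw [lineClass, Finset.mem_image]
  exact ⟨l, hl, by rw [h, this]⟩

theorem self_mem_lineClass {L : Finset G} (h1L : (1 : G) ∈ L) : L ∈ lineClass L := by
  rw [lineClass, Finset.mem_image]
  refine ⟨1, h1L, ?_⟩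
  simp

/-- Rigidity divisibility: `(s+1) ∣ (t+1)`. -/
theorem sdiv_tdiv (hpg : IsPGSinger G 𝓛 s t α) (hrig : RigidType G 𝓛) :
    (s + 1) ∣ (t + 1) := by
  classical
  have main : ∀ (S : Finset (Finset G)), S ⊆ linesThrough 𝓛 1 →
      (∀ L ∈ S, ∀ g : G, L.image (fun y => g * y) ∈ linesThrough 𝓛 1 →
        L.image (fun y => g * y) ∈ S) → (s + 1) ∣ S.card := by
    intro S
    induction S using Finset.strongInduction with
    | _ S ih =>
      intro hsub hclosed
      rcases S.eq_empty_or_nonempty with rfl | ⟨L, hLS⟩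
      · simp
      · have hLT : L ∈ linesThrough 𝓛 1 := hsub hLS
        have hclsub : lineClass L ⊆ S := by
          intro M hM
          rw [lineClass, Finset.mem_image] at hM
          obtain ⟨y, hy, rfl⟩ := hM
          refine hclosed L hLS y⁻¹ ?_
          exact lineClass_subset hpg hLT (by
            rw [lineClass, Finset.mem_image]; exact ⟨y, hy, rfl⟩)
        have hLcl : L ∈ lineClass L := self_mem_lineClass (mem_linesThrough.mp hLT).2
        have hss : S \ lineClass L ⊂ S := by
          refine Finset.sdiff_ssubset ?_ ?_
          · exact hclsub
          · exact ⟨L, hLcl⟩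
        have hsub' : S \ lineClass L ⊆ linesThrough 𝓛 1 :=
          (Finset.sdiff_subset).trans hsub
        have hclosed' : ∀ M ∈ S \ lineClass L, ∀ g : G,
            M.image (fun y => g * y) ∈ linesThrough 𝓛 1 →
            M.image (fun y => g * y) ∈ S \ lineClass L := by
          intro M hM g hgT
          obtain ⟨hMS, hMncl⟩ := Finset.mem_sdiff.mp hM
          refine Finset.mem_sdiff.mpr ⟨hclosed M hMS g hgT, ?_⟩
          intro hgcl
          apply hMncl
          -- M ∈ lineClass L since g•M ∈ lineClass L
          rw [lineClass, Finset.mem_image] at hgcl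
          obtain ⟨y, hy, heq⟩ := hgcl
          apply mem_lineClass_of_translate hpg (hsub hMS) (g⁻¹ * y⁻¹)
          have := congrArg (Finset.image (fun z => g⁻¹ * z)) heq
          rw [image_image_mul] at this
          have hM' : (M.image (fun y => g * y)).image (fun z => g⁻¹ * z) = M := by
            rw [image_image_mul]
            simp
          rw [hM'] at this
          exact this.symm
        have hdvd := ih (S \ lineClass L) hss hsub' hclosed'
        have hcard : S.card = (S \ lineClass L).card + (s + 1) := by
          rw [Finset.card_sdiff_of_subset hclsub, lineClass_card hpg hrig (mem_linesThrough.mp hLT).1]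
          have := Finset.card_le_card hclsub
          rw [lineClass_card hpg hrig (mem_linesThrough.mp hLT).1] at this
          omega
        rw [hcard]
        exact Nat.dvd_add hdvd dvd_rfl
  have := main (linesThrough 𝓛 1) (le_refl _) (fun L hL g h => h)
  rwa [linesThrough_card hpg] at this

/-- Existence of a point not collinear with `1`. -/
theorem exists_noncol (hpg : IsPGSinger G 𝓛 s t α) (hrig : RigidType G 𝓛)
    (hα2 : 2 ≤ α) (hαs : α < s) :
    ∃ g : G, g ≠ 1 ∧ ¬ PGCol 𝓛 1 g := by
  obtain ⟨L₀, hL₀, h1L₀⟩ := exists_line_through_one hpg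
  have hx : ∃ x : G, x ∉ L₀ := by
    by_contra h
    push_neg at h
    have htrans : ∀ g : G, L₀.image (fun y => g * y) = L₀ := by
      intro g
      apply Finset.eq_of_subset_of_card_le
      · intro z _
        exact h z
      · rw [Finset.card_image_of_injective _ (mul_right_injective g)]
    have hall1 : ∀ g : G, g = 1 := fun g => hrig g L₀ hL₀ (htrans g)
    have hcard1 : Fintype.card G = 1 :=
      Fintype.card_eq_one_iff.mpr ⟨1, fun g => hall1 g⟩
    have h2 : s + 1 ≤ Fintype.card G := by
      rw [← hpg.line_card L₀ hL₀, ← Finset.card_univ]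
      exact Finset.card_le_card (Finset.subset_univ _)
    omega
  obtain ⟨x, hxL₀⟩ := hx
  have hseen := seen_card hpg hL₀ hxL₀
  have hz : ∃ z ∈ L₀, ¬ PGCol 𝓛 x z := by
    by_contra h
    push_neg at h
    have : L₀.filter (fun z => PGCol 𝓛 x z) = L₀ := Finset.filter_eq_self.mpr h
    rw [this, hpg.line_card L₀ hL₀] at hseen
    omega
  obtain ⟨z, hzL₀, hnz⟩ := hz
  refine ⟨x⁻¹ * z, ?_, ?_⟩
  · intro h
    have hxz : x = z := by
      rw [inv_mul_eq_one] at h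
      exact h
    exact hxL₀ (hxz ▸ hzL₀)
  · intro hcol
    apply hnz
    have := col_translate hpg x hcol
    simpa [mul_inv_cancel_left] using this

/-- The line-counting function: `F g` = number of lines through `1` and `g`
(with `F 1 = t+1`). -/
noncomputable def Fw (𝓛 : Set (Finset G)) (t : ℕ) (g : G) : ℤ :=
  if g = 1 then ((t : ℤ) + 1) else if PGCol 𝓛 1 g then 1 else 0

theorem Fw_one : Fw 𝓛 t (1 : G) = (t : ℤ) + 1 := by simp [Fw]

theorem Fw_shift (hpg : IsPGSinger G 𝓛 s t α) (h g : G) :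
    Fw 𝓛 t (h⁻¹ * g) = if h = g then ((t : ℤ) + 1) else if PGCol 𝓛 h g then 1 else 0 := by
  by_cases hg : h = g
  · subst hg
    simp [Fw]
  · have h1 : h⁻¹ * g ≠ 1 := by
      rw [Ne, inv_mul_eq_one]
      exact hg
    have h2 : PGCol 𝓛 1 (h⁻¹ * g) ↔ PGCol 𝓛 h g := by
      have := col_translate_iff (G := G) hpg h (x := 1) (y := h⁻¹ * g)
      rw [mul_one, mul_inv_cancel_left] at this
      exact this.symm
    rw [Fw, if_neg h1, if_neg hg]
    by_cases hcol : PGCol 𝓛 h g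
    · rw [if_pos (h2.mpr hcol), if_pos hcol]
    · rw [if_neg (fun hc => hcol (h2.mp hc)), if_neg hcol]

theorem sum_Fw (hpg : IsPGSinger G 𝓛 s t α) :
    ∑ g : G, Fw 𝓛 t g = ((s : ℤ) + 1) * ((t : ℤ) + 1) := by
  classical
  rw [← Finset.sum_erase_add _ _ (Finset.mem_univ (1 : G))]
  have h1 : ∀ g ∈ Finset.univ.erase (1 : G),
      Fw 𝓛 t g = if PGCol 𝓛 1 g then (1 : ℤ) else 0 := by
    intro g hg
    rw [Fw, if_neg (Finset.mem_erase.mp hg).1]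
  rw [Finset.sum_congr rfl h1, Fw_one, Finset.sum_boole]
  have h2 : (Finset.univ.erase (1 : G)).filter (fun g => PGCol 𝓛 1 g)
      = Finset.univ.filter (fun g : G => PGCol 𝓛 1 g) := by
    ext g
    simp only [Finset.mem_filter, Finset.mem_erase, Finset.mem_univ, true_and, and_iff_right_iff_imp]
    intro hcol
    exact ⟨Ne.symm hcol.ne, trivial⟩
  rw [h2, theta_card hpg]
  push_cast
  ring

theorem conv_Fw (hpg : IsPGSinger G 𝓛 s t α) (hα2 : 2 ≤ α) (hαs : α < s) (g : G) :
    ∑ h : G, Fw 𝓛 t h * Fw 𝓛 t (h⁻¹ * g)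
      = ((s : ℤ) + t + 1 - α) * Fw 𝓛 t g + (α : ℤ) * ((t : ℤ) + 1) := by
  classical
  by_cases hg : g = 1
  · subst hg
    have hterm : ∀ h ∈ Finset.univ.erase (1 : G),
        Fw 𝓛 t h * Fw 𝓛 t (h⁻¹ * 1) = if PGCol 𝓛 1 h then (1 : ℤ) else 0 := by
      intro h hh
      have hne : h ≠ 1 := (Finset.mem_erase.mp hh).1
      rw [Fw_shift hpg, Fw, if_neg hne, if_neg hne]
      by_cases hcol : PGCol 𝓛 1 h
      · rw [if_pos hcol, if_pos hcol.symm, one_mul]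
      · rw [if_neg hcol, if_neg (fun hc => hcol hc.symm), zero_mul]
    rw [← Finset.sum_erase_add _ _ (Finset.mem_univ (1 : G)),
      Finset.sum_congr rfl hterm, Finset.sum_boole]
    have h2 : (Finset.univ.erase (1 : G)).filter (fun h => PGCol 𝓛 1 h)
        = Finset.univ.filter (fun h : G => PGCol 𝓛 1 h) := by
      ext h
      simp only [Finset.mem_filter, Finset.mem_erase, Finset.mem_univ, true_and,
        and_iff_right_iff_imp]
      intro hcol
      exact ⟨Ne.symm hcol.ne, trivial⟩
    rw [h2, theta_card hpg]
    simp only [inv_one, one_mul, Fw_one]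
    push_cast
    ring
  · -- g ≠ 1
    have hne1g : (1 : G) ≠ g := Ne.symm hg
    have hpairsub : ({1, g} : Finset G) ⊆ Finset.univ := Finset.subset_univ _
    rw [← Finset.sum_sdiff hpairsub]
    have hpair : ∑ h ∈ ({1, g} : Finset G), Fw 𝓛 t h * Fw 𝓛 t (h⁻¹ * g)
        = ((t : ℤ) + 1) * Fw 𝓛 t g + Fw 𝓛 t g * ((t : ℤ) + 1) := by
      rw [Finset.sum_pair hne1g]
      simp [Fw_one, Fw_shift hpg]
    have hrest : ∀ h ∈ Finset.univ \ ({1, g} : Finset G),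
        Fw 𝓛 t h * Fw 𝓛 t (h⁻¹ * g)
          = if (PGCol 𝓛 1 h ∧ PGCol 𝓛 h g) then (1 : ℤ) else 0 := by
      intro h hh
      simp only [Finset.mem_sdiff, Finset.mem_univ, true_and, Finset.mem_insert,
        Finset.mem_singleton, not_or] at hh
      obtain ⟨hne1, hneg⟩ := hh
      rw [Fw, if_neg hne1, Fw_shift hpg, if_neg hneg]
      by_cases h1 : PGCol 𝓛 1 h <;> by_cases h2 : PGCol 𝓛 h g <;>
        simp [h1, h2]
    rw [Finset.sum_congr rfl hrest, Finset.sum_boole]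
    have hCN : (Finset.univ \ ({1, g} : Finset G)).filter
        (fun h => PGCol 𝓛 1 h ∧ PGCol 𝓛 h g) = CNfin 𝓛 g := by
      ext h
      simp only [CNfin, Finset.mem_filter, Finset.mem_sdiff, Finset.mem_univ, true_and,
        Finset.mem_insert, Finset.mem_singleton, not_or]
      tauto
    rw [hCN, hpair]
    by_cases hcol : PGCol 𝓛 1 g
    · rw [CN_col hpg hcol]
      have hFg : Fw 𝓛 t g = 1 := by
        rw [Fw, if_neg hg, if_pos hcol]
      rw [hFg]
      have hs1 : 1 ≤ s := by omega
      have hα1 : 1 ≤ α := by omega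
      rw [Nat.cast_add, Nat.cast_mul, Nat.cast_sub hs1, Nat.cast_sub hα1]
      push_cast
      ring
    · rw [CN_ncol hpg hg hcol]
      have hFg : Fw 𝓛 t g = 0 := by
        rw [Fw, if_neg hg, if_neg hcol]
      rw [hFg]
      push_cast
      ring

/-- The spectral element `E = v·F − (s+1)(t+1)`. -/
noncomputable def Ew (𝓛 : Set (Finset G)) (s t : ℕ) (g : G) : ℤ :=
  (Fintype.card G : ℤ) * Fw 𝓛 t g - ((s : ℤ) + 1) * ((t : ℤ) + 1)

theorem conv_Ew (hpg : IsPGSinger G 𝓛 s t α) (hα2 : 2 ≤ α) (hαs : α < s) (g : G) :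
    ∑ h : G, Ew 𝓛 s t h * Ew 𝓛 s t (h⁻¹ * g)
      = (((s : ℤ) + t + 1 - α) * (Fintype.card G : ℤ)) * Ew 𝓛 s t g := by
  classical
  have hv := v_formula hpg (by omega)
  have hvα : (α : ℤ) * (Fintype.card G : ℤ) = ((s : ℤ) + 1) * ((s : ℤ) * t + α) := by
    exact_mod_cast hv
  have hbij : Function.Bijective (fun h : G => h⁻¹ * g) := by
    have hinv : Function.Involutive (fun h : G => h⁻¹ * g) := by
      intro h
      simp only [mul_inv_rev, inv_inv]
      rw [mul_comm g⁻¹ h, mul_assoc, inv_mul_cancel, mul_one]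
    exact hinv.bijective
  have hsum2 : ∑ h : G, Fw 𝓛 t (h⁻¹ * g) = ((s : ℤ) + 1) * ((t : ℤ) + 1) := by
    rw [← sum_Fw hpg]
    exact Fintype.sum_bijective _ hbij _ _ (fun h => rfl)
  have expand : ∀ h : G, Ew 𝓛 s t h * Ew 𝓛 s t (h⁻¹ * g)
      = (Fintype.card G : ℤ) * (Fintype.card G : ℤ) * (Fw 𝓛 t h * Fw 𝓛 t (h⁻¹ * g))
        - ((Fintype.card G : ℤ) * (((s : ℤ) + 1) * ((t : ℤ) + 1))) * Fw 𝓛 t h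
        - ((Fintype.card G : ℤ) * (((s : ℤ) + 1) * ((t : ℤ) + 1))) * Fw 𝓛 t (h⁻¹ * g)
        + (((s : ℤ) + 1) * ((t : ℤ) + 1)) * (((s : ℤ) + 1) * ((t : ℤ) + 1)) := by
    intro h
    simp only [Ew]
    ring
  rw [Finset.sum_congr rfl (fun h _ => expand h)]
  rw [Finset.sum_add_distrib, Finset.sum_sub_distrib, Finset.sum_sub_distrib,
    ← Finset.mul_sum, ← Finset.mul_sum, ← Finset.mul_sum,
    conv_Fw hpg hα2 hαs g, sum_Fw hpg, hsum2, Finset.sum_const, Finset.card_univ,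
    nsmul_eq_mul]
  simp only [Ew]
  linear_combination ((Fintype.card G : ℤ) * ((t : ℤ) + 1)) * hvα

theorem sigma_dvd (hpg : IsPGSinger G 𝓛 s t α) (hrig : RigidType G 𝓛)
    (hα2 : 2 ≤ α) (hαs : α < s) (hαt : α < t) :
    ((s : ℤ) + t + 1 - α) ∣ (((s : ℤ) + 1) * ((t : ℤ) + 1)) := by
  classical
  obtain ⟨g₀, hg₀1, hg₀n⟩ := exists_noncol hpg hrig hα2 hαs
  have hv0 : (Fintype.card G : ℤ) ≠ 0 := by
    have := Fintype.card_pos (α := G)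
    positivity
  have hσpos : (0 : ℤ) < (s : ℤ) + t + 1 - α := by
    have : (α : ℤ) < t := by exact_mod_cast hαt
    have hs0 : (0 : ℤ) ≤ s := by positivity
    linarith
  set A : Matrix G G ℤ := Matrix.of (fun g h : G => Ew 𝓛 s t (g * h⁻¹)) with hAdef
  set B : Matrix G G ℤ := Matrix.of (fun g h : G => if g₀ * h = g then 1 else 0) with hBdef
  have hAA : A * A = ((((s : ℤ) + t + 1 - α) * (Fintype.card G : ℤ))) • A := by
    ext g h
    simp only [Matrix.mul_apply, Matrix.smul_apply, Matrix.of_apply, smul_eq_mul, hAdef]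
    have hb : Function.Bijective (fun x : G => g * x⁻¹) := by
      have hinv : Function.Involutive (fun x : G => g * x⁻¹) := by
        intro x
        simp only [mul_inv_rev, inv_inv]
        rw [mul_comm x g⁻¹, ← mul_assoc, mul_inv_cancel, one_mul]
      exact hinv.bijective
    have hreindex : ∑ x : G, Ew 𝓛 s t (g * x⁻¹) * Ew 𝓛 s t (x * h⁻¹)
        = ∑ u : G, Ew 𝓛 s t u * Ew 𝓛 s t (u⁻¹ * (g * h⁻¹)) := by
      refine Fintype.sum_bijective _ hb _ _ ?_
      intro x
      have hx : x * h⁻¹ = (g * x⁻¹)⁻¹ * (g * h⁻¹) := by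
        simp [mul_inv_rev, mul_assoc, inv_mul_cancel_left]
      rw [hx]
    rw [hreindex, conv_Ew hpg hα2 hαs (g * h⁻¹)]
  have hABval : A * B = Matrix.of (fun g h : G => Ew 𝓛 s t (g * h⁻¹ * g₀⁻¹)) := by
    ext g h
    simp only [Matrix.mul_apply, Matrix.of_apply, hAdef, hBdef, mul_ite, mul_one, mul_zero]
    rw [Finset.sum_ite_eq Finset.univ (g₀ * h) (fun x => Ew 𝓛 s t (g * x⁻¹))]
    simp only [Finset.mem_univ, if_true]
    congr 1
    simp only [mul_inv_rev]
    rw [← mul_assoc]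
  have hBAval : B * A = Matrix.of (fun g h : G => Ew 𝓛 s t (g * h⁻¹ * g₀⁻¹)) := by
    ext g h
    simp only [Matrix.mul_apply, Matrix.of_apply, hAdef, hBdef, ite_mul, one_mul, zero_mul]
    have hcond : ∀ x : G, (if g₀ * x = g then Ew 𝓛 s t (x * h⁻¹) else 0)
        = (if x = g₀⁻¹ * g then Ew 𝓛 s t (x * h⁻¹) else 0) := by
      intro x
      congr 1
      simp only [eq_iff_iff]
      constructor
      · intro hx; rw [← hx, inv_mul_cancel_left]
      · intro hx; rw [hx, mul_inv_cancel_left]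
    rw [Finset.sum_congr rfl (fun x _ => hcond x),
      Finset.sum_ite_eq' Finset.univ (g₀⁻¹ * g) (fun x => Ew 𝓛 s t (x * h⁻¹))]
    simp only [Finset.mem_univ, if_true]
    congr 1
    rw [mul_comm g₀⁻¹ g, mul_assoc, mul_comm g₀⁻¹ h⁻¹, ← mul_assoc]
  have hABBA : A * B = B * A := by rw [hABval, hBAval]
  have hcne : (((s : ℤ) + t + 1 - α) * (Fintype.card G : ℤ)) ≠ 0 :=
    mul_ne_zero (ne_of_gt hσpos) hv0
  have hdvd := dvd_trace_of_idem A B _ hcne hAA hABBA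
  have htr : (A * B).trace = (Fintype.card G : ℤ) * Ew 𝓛 s t g₀⁻¹ := by
    rw [hABval]
    simp only [Matrix.trace, Matrix.diag, Matrix.of_apply]
    have : ∀ g : G, Ew 𝓛 s t (g * g⁻¹ * g₀⁻¹) = Ew 𝓛 s t g₀⁻¹ := by
      intro g
      rw [mul_inv_cancel, one_mul]
    rw [Finset.sum_congr rfl (fun g _ => this g), Finset.sum_const, Finset.card_univ,
      nsmul_eq_mul]
  have hE : Ew 𝓛 s t g₀⁻¹ = -(((s : ℤ) + 1) * ((t : ℤ) + 1)) := by
    have hne : g₀⁻¹ ≠ 1 := by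
      rw [Ne, inv_eq_one]
      exact hg₀1
    have hnc : ¬ PGCol 𝓛 1 g₀⁻¹ := by
      intro hcol
      apply hg₀n
      have := col_translate hpg g₀ hcol
      rw [mul_one, mul_inv_cancel] at this
      exact this.symm
    rw [Ew, Fw, if_neg hne, if_neg hnc]
    ring
  rw [htr, hE] at hdvd
  have hdvd2 : (((s : ℤ) + t + 1 - α) * (Fintype.card G : ℤ)) ∣
      ((Fintype.card G : ℤ) * (((s : ℤ) + 1) * ((t : ℤ) + 1))) := by
    have := hdvd.neg_right
    simpa [mul_comm] using this.neg_right
  have hdvd3 : ((Fintype.card G : ℤ) * (((s : ℤ) + t + 1 - α))) ∣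
      ((Fintype.card G : ℤ) * (((s : ℤ) + 1) * ((t : ℤ) + 1))) := by
    rwa [mul_comm ((Fintype.card G : ℤ)) _]
  exact (mul_dvd_mul_iff_left hv0).mp hdvd3

/-- Final arithmetic: from `σ ∣ (s+1)(t+1)`, `(s+1) ∣ (t+1)` and properness, `s < (α+1)² - 1`. -/
theorem final_numtheory (s t α k : ℕ) (hα2 : 2 ≤ α) (hαs : α < s) (hαt : α < t)
    (hT : t + 1 = (s + 1) * k)
    (hdvd : (s + t + 1 - α) ∣ ((s + 1) * (t + 1))) : s < (α + 1) ^ 2 - 1 := by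
  set σn : ℕ := s + t + 1 - α with hσn
  set δ : ℕ := s - α with hδ
  have hδ1 : 1 ≤ δ := by omega
  have hσeq : σn = (t + 1) + δ := by omega
  have hσpos : 1 ≤ σn := by omega
  -- σ ∣ (t+1)²
  have hT2 : σn ∣ (t + 1) * (t + 1) := by
    have : (t + 1) * (t + 1) = k * ((s + 1) * (t + 1)) := by
      rw [hT]; ring
    rw [this]
    exact hdvd.mul_left k
  -- pass to ℤ to handle subtraction
  have hzδ : (δ : ℤ) = (σn : ℤ) - ((t : ℤ) + 1) := by
    omega
  have hδδ : σn ∣ δ * δ := by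
    have hz : ((σn : ℤ)) ∣ ((δ : ℤ) * (δ : ℤ)) := by
      have e : (δ : ℤ) * (δ : ℤ)
          = (σn : ℤ) * ((σn : ℤ) - 2 * ((t : ℤ) + 1)) + ((t : ℤ) + 1) * ((t : ℤ) + 1) := by
        rw [hzδ]; ring
      rw [e]
      refine dvd_add (Dvd.intro _ rfl) ?_
      have : ((t : ℤ) + 1) * ((t : ℤ) + 1) = (((t + 1) * (t + 1) : ℕ) : ℤ) := by push_cast; ring
      rw [this]
      exact_mod_cast hT2
    have : ((δ * δ : ℕ) : ℤ) = (δ : ℤ) * (δ : ℤ) := by push_cast; ring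
    exact_mod_cast (this ▸ hz)
  have hδs : σn ∣ δ * (s + 1) := by
    have hz : ((σn : ℤ)) ∣ ((δ : ℤ) * ((s : ℤ) + 1)) := by
      have e : (δ : ℤ) * ((s : ℤ) + 1)
          = (σn : ℤ) * ((s : ℤ) + 1) - ((s : ℤ) + 1) * ((t : ℤ) + 1) := by
        rw [hzδ]; ring
      rw [e]
      refine dvd_sub (Dvd.intro _ rfl) ?_
      have : ((s : ℤ) + 1) * ((t : ℤ) + 1) = (((s + 1) * (t + 1) : ℕ) : ℤ) := by push_cast; ring
      rw [this]
      exact_mod_cast hdvd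
    have : ((δ * (s + 1) : ℕ) : ℤ) = (δ : ℤ) * ((s : ℤ) + 1) := by push_cast; ring
    exact_mod_cast (this ▸ hz)
  -- σ ∣ δ * gcd(δ, s+1)
  set g₁ : ℕ := Nat.gcd δ (s + 1) with hg₁
  have hgdvd : σn ∣ δ * g₁ := by
    have h1 : σn ∣ Nat.gcd (δ * δ) (δ * (s + 1)) := Nat.dvd_gcd hδδ hδs
    rwa [Nat.gcd_mul_left] at h1
  have hgα : g₁ ∣ (α + 1) := by
    have e : s + 1 = (α + 1) + δ := by omega
    rw [hg₁, e, Nat.gcd_add_self_right]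
    exact Nat.gcd_dvd_right δ (α + 1)
  have hg₁le : g₁ ≤ α + 1 := Nat.le_of_dvd (by omega) hgα
  have hg₁pos : 1 ≤ g₁ := by
    rcases Nat.eq_zero_or_pos g₁ with h | h
    · exfalso
      have := Nat.eq_zero_of_gcd_eq_zero_right (hg₁ ▸ h)
      omega
    · exact h
  obtain ⟨c, hc⟩ := hgdvd
  have hcpos : 1 ≤ c := by
    rcases Nat.eq_zero_or_pos c with h | h
    · exfalso
      rw [h, Nat.mul_zero] at hc
      have : 1 ≤ δ * g₁ := Nat.one_le_iff_ne_zero.mpr (Nat.mul_ne_zero (by omega) (by omega))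
      omega
    · exact h
  have hσδ : δ < σn := by omega
  have hclt : c < g₁ := by
    have h1 : δ * c < σn * c := by
      exact Nat.mul_lt_mul_of_lt_of_le hσδ (le_refl c) (by omega)
    rw [← hc] at h1
    exact Nat.lt_of_mul_lt_mul_left h1
  set m : ℕ := g₁ - c with hm
  have hm1 : 1 ≤ m := by omega
  have hkey : (t + 1) * c = δ * m := by
    have e1 : σn * c = (t + 1) * c + δ * c := by
      rw [hσeq]; ring
    have e2 : δ * g₁ = δ * m + δ * c := by
      have : g₁ = m + c := by omega
      rw [this]; ring
    omega
  have hkc : (s + 1) * (k * c) = δ * m := by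
    rw [← hkey, hT]; ring
  have hsm : (s + 1) * m = (s + 1) * (k * c) + (α + 1) * m := by
    rw [hkc]
    have e : s + 1 = δ + (α + 1) := by omega
    rw [e]; ring
  have hmkc : k * c < m := by
    have h1 : 1 ≤ (α + 1) * m := Nat.one_le_iff_ne_zero.mpr (Nat.mul_ne_zero (by omega) (by omega))
    have h2 : (s + 1) * (k * c) < (s + 1) * m := by omega
    exact Nat.lt_of_mul_lt_mul_left h2
  set q : ℕ := m - k * c with hq
  have hq1 : 1 ≤ q := by omega
  have hqe : (s + 1) * q = (α + 1) * m := by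
    have e : m = q + k * c := by omega
    have : (s + 1) * (q + k * c) = (s + 1) * (k * c) + (α + 1) * m := by
      rw [← e]; exact hsm
    have e2 : (s + 1) * (q + k * c) = (s + 1) * q + (s + 1) * (k * c) := by ring
    omega
  have hmα : m ≤ α := by omega
  have hfinal : s + 1 ≤ (α + 1) * α := by
    calc s + 1 ≤ (s + 1) * q := Nat.le_mul_of_pos_right _ (by omega)
    _ = (α + 1) * m := hqe
    _ ≤ (α + 1) * α := Nat.mul_le_mul_left _ hmα
  have hsq : (α + 1) ^ 2 = (α + 1) * α + (α + 1) := by ring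
  have h1 : s < (α + 1) * α + α := by
    have : s < (α + 1) * α := hfinal
    exact Nat.lt_of_lt_of_le this (Nat.le_add_right _ _)
  omega

end AuxPG


/-- for a proper `pg(s,t,α)` of rigid type with abelian Singer group `G`,
`s < (α+1)² - 1`. -/
theorem rigid_type_s_bound
    (G : Type*) [CommGroup G] [Fintype G] [DecidableEq G]
    (s t α : ℕ) (hα2 : 2 ≤ α) (hαs : α < s) (hαt : α < t)
    (𝓛 : Set (Finset G)) (hpg : IsPGSinger G 𝓛 s t α) (hrig : RigidType G 𝓛) :
    s < (α + 1) ^ 2 - 1 := by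
  classical
  obtain ⟨k, hk⟩ := sdiv_tdiv hpg hrig
  have hdvdZ := sigma_dvd hpg hrig hα2 hαs hαt
  have hcast : (((s + t + 1 - α : ℕ)) : ℤ) = (s : ℤ) + t + 1 - α := by
    have hle : α ≤ s + t + 1 := by omega
    omega
  have hdvdN : (s + t + 1 - α) ∣ ((s + 1) * (t + 1)) := by
    have h1 : (((s + t + 1 - α : ℕ)) : ℤ) ∣ ((((s + 1) * (t + 1) : ℕ)) : ℤ) := by
      rw [hcast]
      have : ((((s + 1) * (t + 1) : ℕ)) : ℤ) = ((s : ℤ) + 1) * ((t : ℤ) + 1) := by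
        push_cast; ring
      rw [this]
      exact hdvdZ
    exact_mod_cast h1
  exact final_numtheory s t α k hα2 hαs hαt hk hdvdN
end

section
/- Let D be a regular (v,k,λ,μ)-partial difference set in a finite abelian group G, and assume Δ = (λ−μ)² + 4(k−μ) is a perfect square. Let g ∈ G be an element of order r, and let s be a positive integer with gcd(s,r) = 1. Then g ∈ D if and only if gˢ ∈ D. -/
/-- `D` is a `(v,k,λ,μ)` partial difference set in the group `G` (written
multiplicatively): `|G| = v`, `|D| = k`, every non-identity element of `D` is represented
exactly `lam` times as `g * h⁻¹` with `g, h ∈ D`, `g ≠ h`, and every non-identity element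
of `G` not in `D` exactly `mu` times. -/
def IsPDS {G : Type*} [Group G] (D : Set G) (v k lam mu : ℕ) : Prop :=
  Nat.card G = v ∧ D.ncard = k ∧
  (∀ z : G, z ≠ 1 → z ∈ D →
    {p : G × G | p.1 ∈ D ∧ p.2 ∈ D ∧ p.1 ≠ p.2 ∧ p.1 * p.2⁻¹ = z}.ncard = lam) ∧
  (∀ z : G, z ≠ 1 → z ∉ D →
    {p : G × G | p.1 ∈ D ∧ p.2 ∈ D ∧ p.1 ≠ p.2 ∧ p.1 * p.2⁻¹ = z}.ncard = mu)

/-- `D` is regular: it avoids the identity and is closed under inversion. -/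
def IsRegularPDS {G : Type*} [Group G] (D : Set G) : Prop :=
  (1 : G) ∉ D ∧ ∀ g ∈ D, g⁻¹ ∈ D

/-- `D` is a trivial PDS: `D ∪ {1}` or `G \ D` is a subgroup of `G`. -/
def IsTrivialPDS {G : Type*} [Group G] (D : Set G) : Prop :=
  (∃ H : Subgroup G, D ∪ {1} = (H : Set G)) ∨ ∃ H : Subgroup G, Dᶜ = (H : Set G)


open Finset in
private lemma charSum_eq_zero' {G K : Type*} [CommGroup G] [Fintype G] [Field K]
    (χ : G →* Kˣ) (hχ : χ ≠ 1) : ∑ x : G, ((χ x : Kˣ) : K) = 0 := by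
  obtain ⟨y, hy⟩ : ∃ y, χ y ≠ 1 := by
    by_contra h; push_neg at h; exact hχ (MonoidHom.ext fun x => h x)
  have h1 : ((χ y : Kˣ) : K) * ∑ x : G, ((χ x : Kˣ) : K) = ∑ x : G, ((χ x : Kˣ) : K) := by
    rw [Finset.mul_sum]
    calc ∑ x : G, ((χ y : Kˣ) : K) * ((χ x : Kˣ) : K)
        = ∑ x : G, ((χ (y * x) : Kˣ) : K) := by simp [map_mul]
      _ = ∑ x : G, ((χ x : Kˣ) : K) :=
          Fintype.sum_equiv (Equiv.mulLeft y) _ _ (fun x => rfl)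
  have h2 : (((χ y : Kˣ) : K) - 1) * ∑ x : G, ((χ x : Kˣ) : K) = 0 := by
    rw [sub_mul, one_mul, h1, sub_self]
  rcases mul_eq_zero.mp h2 with h | h
  · exact absurd (Units.val_eq_one.mp (sub_eq_zero.mp h)) hy
  · exact h

private lemma dualSum_eq_zero' {G K : Type*} [CommGroup G] [Fintype G] [Field K]
    [Fintype (G →* Kˣ)] {x : G} (hx : ∃ χ : G →* Kˣ, χ x ≠ 1) :
    ∑ χ : G →* Kˣ, ((χ x : Kˣ) : K) = 0 := by
  obtain ⟨χ₀, hχ₀⟩ := hx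
  have h1 : ((χ₀ x : Kˣ) : K) * ∑ χ : G →* Kˣ, ((χ x : Kˣ) : K)
      = ∑ χ : G →* Kˣ, ((χ x : Kˣ) : K) := by
    rw [Finset.mul_sum]
    calc ∑ χ : G →* Kˣ, ((χ₀ x : Kˣ) : K) * ((χ x : Kˣ) : K)
        = ∑ χ : G →* Kˣ, (((χ₀ * χ) x : Kˣ) : K) := by
          refine Finset.sum_congr rfl fun χ _ => ?_
          simp [MonoidHom.mul_apply]
      _ = ∑ χ : G →* Kˣ, ((χ x : Kˣ) : K) :=
          Fintype.sum_equiv (Equiv.mulLeft χ₀) _ _ (fun χ => rfl)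
  have h2 : (((χ₀ x : Kˣ) : K) - 1) * ∑ χ : G →* Kˣ, ((χ x : Kˣ) : K) = 0 := by
    rw [sub_mul, one_mul, h1, sub_self]
  rcases mul_eq_zero.mp h2 with h | h
  · exact absurd (Units.val_eq_one.mp (sub_eq_zero.mp h)) hχ₀
  · exact h

private lemma finset_eq_of_charSums_eq' {G K : Type*} [CommGroup G] [Fintype G] [Field K]
    [CharZero K] [Fintype (G →* Kˣ)]
    (hsep : ∀ x : G, x ≠ 1 → ∃ χ : G →* Kˣ, χ x ≠ 1)
    (hcard : Fintype.card (G →* Kˣ) = Fintype.card G)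
    (A B : Finset G)
    (h : ∀ χ : G →* Kˣ, ∑ x ∈ A, ((χ x : Kˣ) : K) = ∑ x ∈ B, ((χ x : Kˣ) : K)) :
    A = B := by
  classical
  set c : G → K := fun z => (if z ∈ A then (1:K) else 0) - (if z ∈ B then 1 else 0) with hcdef
  have hc : ∀ χ : G →* Kˣ, ∑ z : G, c z * ((χ z : Kˣ) : K) = 0 := by
    intro χ
    simp only [hcdef, sub_mul, ite_mul, one_mul, zero_mul]
    rw [Finset.sum_sub_distrib, Finset.sum_ite_mem, Finset.sum_ite_mem,
      Finset.univ_inter, Finset.univ_inter, h χ, sub_self]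
  have hc0 : ∀ y : G, c y = 0 := by
    intro y
    have hswap : ∑ z : G, c z * ∑ χ : G →* Kˣ, ((χ (z * y⁻¹) : Kˣ) : K) = 0 := by
      calc ∑ z : G, c z * ∑ χ : G →* Kˣ, ((χ (z * y⁻¹) : Kˣ) : K)
          = ∑ z : G, ∑ χ : G →* Kˣ, (c z * ((χ z : Kˣ) : K)) * (((χ y)⁻¹ : Kˣ) : K) := by
            refine Finset.sum_congr rfl fun z _ => ?_
            rw [Finset.mul_sum]
            refine Finset.sum_congr rfl fun χ _ => ?_
            rw [map_mul, map_inv, Units.val_mul, mul_assoc]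
        _ = ∑ χ : G →* Kˣ, (∑ z : G, c z * ((χ z : Kˣ) : K)) * (((χ y)⁻¹ : Kˣ) : K) := by
            rw [Finset.sum_comm]
            exact Finset.sum_congr rfl fun χ _ => (Finset.sum_mul ..).symm
        _ = 0 := by simp [hc]
    have hval : ∀ z : G, (∑ χ : G →* Kˣ, ((χ (z * y⁻¹) : Kˣ) : K))
        = if z = y then (Fintype.card G : K) else 0 := by
      intro z
      by_cases hzy : z = y
      · subst hzy
        simp only [mul_inv_cancel, map_one, Units.val_one, if_true]
        rw [Finset.sum_const, Finset.card_univ, hcard, nsmul_eq_mul, mul_one]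
      · rw [if_neg hzy]
        exact dualSum_eq_zero' (hsep _ (by rwa [Ne, mul_inv_eq_one]))
    rw [Finset.sum_congr rfl (fun z _ => by rw [hval z])] at hswap
    simp only [mul_ite, mul_zero, Finset.sum_ite_eq', Finset.mem_univ, if_true] at hswap
    have hcardne : (Fintype.card G : K) ≠ 0 := Nat.cast_ne_zero.mpr Fintype.card_pos.ne'
    exact (mul_eq_zero.mp hswap).resolve_right hcardne
  ext z
  have hz := hc0 z
  rw [hcdef] at hz
  by_cases h1 : z ∈ A <;> by_cases h2 : z ∈ B <;> simp [h1, h2] at hz ⊢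

section MainProof

variable {G : Type*} [CommGroup G] [Fintype G]

open Finset in
/-- The key quadratic identity satisfied by nontrivial character sums over a PDS. -/
private lemma charSum_quadratic {K : Type*} [Field K] [DecidableEq G]
    (Df : Finset G) (k lam mu : ℕ)
    (hk : Df.card = k)
    (h1D : (1 : G) ∉ Df)
    (hinvD : ∀ x ∈ Df, x⁻¹ ∈ Df)
    (hlam : ∀ z : G, z ≠ 1 → z ∈ Df →
      {p : G × G | p.1 ∈ Df ∧ p.2 ∈ Df ∧ p.1 ≠ p.2 ∧ p.1 * p.2⁻¹ = z}.ncard = lam)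
    (hmu : ∀ z : G, z ≠ 1 → z ∉ Df →
      {p : G × G | p.1 ∈ Df ∧ p.2 ∈ Df ∧ p.1 ≠ p.2 ∧ p.1 * p.2⁻¹ = z}.ncard = mu)
    (χ : G →* Kˣ) (hχ : χ ≠ 1) :
    (∑ x ∈ Df, ((χ x : Kˣ) : K)) * (∑ x ∈ Df, ((χ x : Kˣ) : K))
      = ((lam : K) - mu) * (∑ x ∈ Df, ((χ x : Kˣ) : K)) + ((k : K) - mu) := by
  classical
  have hcount1 : ((Df ×ˢ Df).filter (fun p : G × G => p.1 * p.2⁻¹ = 1)).card = k := by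
    have hdiag : (Df ×ˢ Df).filter (fun p : G × G => p.1 * p.2⁻¹ = 1) = Df.diag := by
      ext ⟨a, b⟩
      simp only [Finset.mem_filter, Finset.mem_product, Finset.mem_diag, mul_inv_eq_one]
      constructor
      · rintro ⟨⟨ha, _⟩, hab⟩; exact ⟨ha, hab⟩
      · rintro ⟨ha, hab⟩; exact ⟨⟨ha, hab ▸ ha⟩, hab⟩
    rw [hdiag, Finset.diag_card, hk]
  have hcountne : ∀ z : G, z ≠ 1 →
      ((Df ×ˢ Df).filter (fun p : G × G => p.1 * p.2⁻¹ = z)).card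
        = if z ∈ Df then lam else mu := by
    intro z hz
    have hset : (Df ×ˢ Df).filter (fun p : G × G => p.1 * p.2⁻¹ = z)
        = {p : G × G | p.1 ∈ Df ∧ p.2 ∈ Df ∧ p.1 ≠ p.2 ∧ p.1 * p.2⁻¹ = z}.toFinset := by
      ext ⟨a, b⟩
      simp only [Finset.mem_filter, Finset.mem_product, Set.mem_toFinset, Set.mem_setOf_eq]
      constructor
      · rintro ⟨⟨ha, hb⟩, hab⟩
        refine ⟨ha, hb, ?_, hab⟩
        rintro rfl
        exact hz (by rw [← hab, mul_inv_cancel])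
      · rintro ⟨ha, hb, _, hab⟩; exact ⟨⟨ha, hb⟩, hab⟩
    have hncard : {p : G × G | p.1 ∈ Df ∧ p.2 ∈ Df ∧ p.1 ≠ p.2 ∧ p.1 * p.2⁻¹ = z}.ncard
        = {p : G × G | p.1 ∈ Df ∧ p.2 ∈ Df ∧ p.1 ≠ p.2 ∧ p.1 * p.2⁻¹ = z}.toFinset.card :=
      Set.ncard_eq_toFinset_card' _
    by_cases hzD : z ∈ Df
    · rw [if_pos hzD, hset, ← hncard]; exact hlam z hz hzD
    · rw [if_neg hzD, hset, ← hncard]; exact hmu z hz hzD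
  have hsum0 : ∑ z : G, ((χ z : Kˣ) : K) = 0 := by
    obtain ⟨y, hy⟩ : ∃ y, χ y ≠ 1 := by
      by_contra h; push_neg at h; exact hχ (MonoidHom.ext fun x => h x)
    have h1 : ((χ y : Kˣ) : K) * ∑ x : G, ((χ x : Kˣ) : K) = ∑ x : G, ((χ x : Kˣ) : K) := by
      rw [Finset.mul_sum]
      calc ∑ x : G, ((χ y : Kˣ) : K) * ((χ x : Kˣ) : K)
          = ∑ x : G, ((χ (y * x) : Kˣ) : K) := by simp [map_mul]
        _ = ∑ x : G, ((χ x : Kˣ) : K) :=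
            Fintype.sum_equiv (Equiv.mulLeft y) _ _ (fun x => rfl)
    have h2 : (((χ y : Kˣ) : K) - 1) * ∑ x : G, ((χ x : Kˣ) : K) = 0 := by
      rw [sub_mul, one_mul, h1, sub_self]
    rcases mul_eq_zero.mp h2 with h | h
    · exact absurd (Units.val_eq_one.mp (sub_eq_zero.mp h)) hy
    · exact h
  have hexp : (∑ x ∈ Df, ((χ x : Kˣ) : K)) * (∑ x ∈ Df, ((χ x : Kˣ) : K))
      = ∑ z : G, ((((Df ×ˢ Df).filter (fun p : G × G => p.1 * p.2⁻¹ = z)).card : K)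
          * ((χ z : Kˣ) : K)) := by
    have hinvsum : ∑ x ∈ Df, ((χ x : Kˣ) : K) = ∑ y ∈ Df, ((χ y⁻¹ : Kˣ) : K) := by
      refine Finset.sum_equiv (Equiv.inv G) (fun x => ?_) (fun x hx => ?_)
      · constructor
        · exact fun h => hinvD x h
        · intro h; simpa using hinvD _ h
      · simp
    calc (∑ x ∈ Df, ((χ x : Kˣ) : K)) * (∑ x ∈ Df, ((χ x : Kˣ) : K))
        = (∑ x ∈ Df, ((χ x : Kˣ) : K)) * (∑ y ∈ Df, ((χ y⁻¹ : Kˣ) : K)) := by rw [← hinvsum]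
      _ = ∑ x ∈ Df, ∑ y ∈ Df, ((χ (x * y⁻¹) : Kˣ) : K) := by
          rw [Finset.sum_mul_sum]
          exact Finset.sum_congr rfl fun x _ => Finset.sum_congr rfl fun y _ => by
            rw [map_mul, Units.val_mul]
      _ = ∑ p ∈ Df ×ˢ Df, ((χ (p.1 * p.2⁻¹) : Kˣ) : K) := by
          rw [Finset.sum_product]
      _ = ∑ z : G, ∑ p ∈ (Df ×ˢ Df).filter (fun p : G × G => p.1 * p.2⁻¹ = z),
            ((χ (p.1 * p.2⁻¹) : Kˣ) : K) :=
          (Finset.sum_fiberwise_of_maps_to (fun p _ => Finset.mem_univ _) _).symm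
      _ = ∑ z : G, ((((Df ×ˢ Df).filter (fun p : G × G => p.1 * p.2⁻¹ = z)).card : K)
            * ((χ z : Kˣ) : K)) := by
          refine Finset.sum_congr rfl fun z _ => ?_
          have hval : ∀ p ∈ (Df ×ˢ Df).filter (fun p : G × G => p.1 * p.2⁻¹ = z),
              ((χ (p.1 * p.2⁻¹) : Kˣ) : K) = ((χ z : Kˣ) : K) := fun p hp => by
            rw [(Finset.mem_filter.mp hp).2]
          rw [Finset.sum_congr rfl hval, Finset.sum_const, nsmul_eq_mul]
  rw [hexp]
  have hsplit : ∀ z : G, ((((Df ×ˢ Df).filter (fun p : G × G => p.1 * p.2⁻¹ = z)).card : K)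
      = (if z = 1 then (k : K) - mu else 0) + (if z ∈ Df then (lam : K) - mu else 0) + mu) := by
    intro z
    by_cases hz : z = 1
    · subst hz
      rw [hcount1, if_pos rfl, if_neg h1D]
      ring
    · rw [hcountne z hz, if_neg hz]
      by_cases hzD : z ∈ Df <;> simp [hzD] <;> ring
  calc ∑ z : G, ((((Df ×ˢ Df).filter (fun p : G × G => p.1 * p.2⁻¹ = z)).card : K)
          * ((χ z : Kˣ) : K))
      = ∑ z : G, (((if z = 1 then (k : K) - mu else 0) + (if z ∈ Df then (lam : K) - mu else 0)
          + mu) * ((χ z : Kˣ) : K)) :=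
        Finset.sum_congr rfl fun z _ => by rw [hsplit z]
    _ = ∑ z : G, ((if z = 1 then ((k : K) - mu) * ((χ z : Kˣ) : K) else 0)
          + (if z ∈ Df then ((lam : K) - mu) * ((χ z : Kˣ) : K) else 0)
          + (mu : K) * ((χ z : Kˣ) : K)) :=
        Finset.sum_congr rfl fun z _ => by
          by_cases hz : z = 1 <;> by_cases hzD : z ∈ Df <;> simp [hz, hzD] <;> ring
    _ = (∑ z : G, (if z = 1 then ((k : K) - mu) * ((χ z : Kˣ) : K) else 0))
        + (∑ z : G, (if z ∈ Df then ((lam : K) - mu) * ((χ z : Kˣ) : K) else 0))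
        + (mu : K) * ∑ z : G, ((χ z : Kˣ) : K) := by
        rw [Finset.sum_add_distrib, Finset.sum_add_distrib, Finset.mul_sum]
    _ = ((lam : K) - mu) * (∑ x ∈ Df, ((χ x : Kˣ) : K)) + ((k : K) - mu) := by
        rw [Finset.sum_ite_eq' Finset.univ (1 : G), if_pos (Finset.mem_univ _),
          Finset.sum_ite_mem, Finset.univ_inter, hsum0, map_one, Units.val_one, mul_one,
          mul_zero, add_zero, ← Finset.mul_sum]
        ring


end MainProof

/-- Local Multiplier Theorem: let `D` be a regular `(v,k,λ,μ)` PDS in a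
finite abelian group `G` with `Δ = (λ-μ)² + 4(k-μ)` a perfect square.  If `g ∈ G` has
order `r` and `s` is a positive integer coprime to `r`, then `g ∈ D ↔ g^s ∈ D`. -/
theorem local_multiplier_theorem
    (G : Type*) [CommGroup G] [Fintype G] (v k lam mu : ℕ) (D : Set G)
    (hpds : IsPDS D v k lam mu) (hreg : IsRegularPDS D)
    (hΔ : ∃ δ : ℤ, ((lam : ℤ) - mu) ^ 2 + 4 * ((k : ℤ) - mu) = δ ^ 2)
    (g : G) (r : ℕ) (hr : r = orderOf g)
    (s : ℕ) (hs : 0 < s) (hcop : Nat.gcd s r = 1) :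
    g ∈ D ↔ g ^ s ∈ D := by
  classical
  obtain ⟨-, hk, hlam, hmu⟩ := hpds
  obtain ⟨h1D, hinv⟩ := hreg
  obtain ⟨δ, hδ⟩ := hΔ
  -- the finset version of D
  have hDfin : D.Finite := Set.toFinite D
  set Df : Finset G := hDfin.toFinset with hDf
  have hmemDf : ∀ x : G, x ∈ Df ↔ x ∈ D := fun x => hDfin.mem_toFinset
  have hkDf : Df.card = k := by rw [← hk, Set.ncard_eq_toFinset_card D hDfin]
  have h1Df : (1 : G) ∉ Df := fun h => h1D (hmemDf 1 |>.mp h)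
  have hinvDf : ∀ x ∈ Df, x⁻¹ ∈ Df := fun x hx =>
    (hmemDf x⁻¹).mpr (hinv x ((hmemDf x).mp hx))
  have hsetEq : ∀ z : G, {p : G × G | p.1 ∈ Df ∧ p.2 ∈ Df ∧ p.1 ≠ p.2 ∧ p.1 * p.2⁻¹ = z}
      = {p : G × G | p.1 ∈ D ∧ p.2 ∈ D ∧ p.1 ≠ p.2 ∧ p.1 * p.2⁻¹ = z} := by
    intro z; ext p; simp only [Set.mem_setOf_eq, hmemDf]
  have hlamDf : ∀ z : G, z ≠ 1 → z ∈ Df →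
      {p : G × G | p.1 ∈ Df ∧ p.2 ∈ Df ∧ p.1 ≠ p.2 ∧ p.1 * p.2⁻¹ = z}.ncard = lam :=
    fun z hz hzD => by rw [hsetEq z]; exact hlam z hz ((hmemDf z).mp hzD)
  have hmuDf : ∀ z : G, z ≠ 1 → z ∉ Df →
      {p : G × G | p.1 ∈ Df ∧ p.2 ∈ Df ∧ p.1 ≠ p.2 ∧ p.1 * p.2⁻¹ = z}.ncard = mu :=
    fun z hz hzD => by rw [hsetEq z]; exact hmu z hz (fun h => hzD ((hmemDf z).mpr h))
  -- the cyclotomic field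
  have hnpos : 0 < Monoid.exponent G := Nat.pos_of_ne_zero Monoid.exponent_ne_zero_of_finite
  haveI : NeZero (Monoid.exponent G) := ⟨hnpos.ne'⟩
  set N : ℕ+ := ⟨Monoid.exponent G, hnpos⟩ with hN
  haveI : NeZero ((N : ℕ+) : ℕ) := ⟨hnpos.ne'⟩
  set K : Type _ := CyclotomicField N ℚ with hK
  haveI : CharZero K := charZero_of_injective_algebraMap (algebraMap ℚ K).injective
  haveI : IsCyclotomicExtension {((N : ℕ+) : ℕ)} ℚ K :=
    CyclotomicField.isCyclotomicExtension _ _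
  have hζ := IsCyclotomicExtension.zeta_spec N ℚ K
  haveI : HasEnoughRootsOfUnity K (Monoid.exponent G) := ⟨⟨_, hζ⟩, inferInstance⟩
  -- the dual group
  obtain ⟨e⟩ := CommGroup.monoidHom_mulEquiv_of_hasEnoughRootsOfUnity G K
  haveI : Fintype (G →* Kˣ) := Fintype.ofEquiv G e.symm.toEquiv
  have hcard : Fintype.card (G →* Kˣ) = Fintype.card G := Fintype.card_congr e.toEquiv
  have hsep : ∀ x : G, x ≠ 1 → ∃ χ : G →* Kˣ, χ x ≠ 1 := fun x hx =>
    CommGroup.exists_apply_ne_one_of_hasEnoughRootsOfUnity G K hx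
  -- the Galois automorphism
  have hirr : Irreducible (Polynomial.cyclotomic (N : ℕ) ℚ) :=
    Polynomial.cyclotomic.irreducible_rat hnpos
  set E := IsCyclotomicExtension.autEquivPow K hirr with hE
  have hrdvd : r ∣ Monoid.exponent G := hr ▸ Monoid.order_dvd_exponent g
  obtain ⟨u, hu⟩ := ZMod.unitsMap_surjective hrdvd (ZMod.unitOfCoprime s hcop)
  set t : ℕ := (u : ZMod (Monoid.exponent G)).val with ht
  have htcop : Nat.Coprime t (Monoid.exponent G) := ZMod.val_coe_unit_coprime u
  have hts : g ^ t = g ^ s := by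
    rw [pow_eq_pow_iff_modEq, ← hr]
    have hcast : (t : ZMod r) = (s : ZMod r) := by
      have h1 := congrArg (Units.val) hu
      rw [ZMod.coe_unitOfCoprime] at h1
      rw [ht, ZMod.natCast_val, ← ZMod.castHom_apply (h := hrdvd)]
      rw [ZMod.unitsMap] at h1
      rw [← h1, Units.coe_map]
      rfl
    exact (ZMod.natCast_eq_natCast_iff _ _ _).mp hcast
  set τ : K ≃ₐ[ℚ] K := E.symm u with hτdef
  have hτζ : τ (IsCyclotomicExtension.zeta N ℚ K) = (IsCyclotomicExtension.zeta N ℚ K) ^ t := by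
    have hEτ : (hζ.autToPow ℚ) τ = u := by
      have happ := E.apply_symm_apply u
      rw [hE] at happ
      rw [← happ]
      rfl
    have := hζ.autToPow_spec ℚ τ
    rw [hEτ] at this
    exact this.symm
  have hτpow : ∀ ξ : K, ξ ^ Monoid.exponent G = 1 → τ ξ = ξ ^ t := by
    intro ξ hξ
    obtain ⟨i, -, rfl⟩ := hζ.eq_pow_of_pow_eq_one hξ
    rw [map_pow, hτζ, ← pow_mul, mul_comm, pow_mul]
  -- rationality of character sums
  have hrat : ∀ χ : G →* Kˣ, ∃ q : ℚ, (∑ x ∈ Df, ((χ x : Kˣ) : K)) = (q : K) := by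
    intro χ
    by_cases hχ1 : χ = 1
    · refine ⟨k, ?_⟩
      subst hχ1
      simp [hkDf]
    · have h2 := charSum_quadratic Df k lam mu hkDf h1Df hinvDf hlamDf hmuDf χ hχ1
      have hδK : ((lam : K) - mu) ^ 2 + 4 * ((k : K) - mu) = ((δ : ℤ) : K) ^ 2 := by
        have hc := congrArg (Int.castRingHom K) hδ
        simp only [map_add, map_pow, map_mul, map_sub, map_natCast, map_ofNat, eq_intCast] at hc
        exact hc
      set S : K := ∑ x ∈ Df, ((χ x : Kˣ) : K) with hS
      have hfac : (2 * S - ((lam : K) - mu) - δ) * (2 * S - ((lam : K) - mu) + δ) = 0 := by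
        linear_combination 4 * h2 + hδK
      rcases mul_eq_zero.mp hfac with h | h
      · refine ⟨((lam : ℚ) - mu + δ) / 2, ?_⟩
        push_cast
        linear_combination h / 2
      · refine ⟨((lam : ℚ) - mu - δ) / 2, ?_⟩
        push_cast
        linear_combination h / 2
  have hfix : ∀ χ : G →* Kˣ, τ (∑ x ∈ Df, ((χ x : Kˣ) : K)) = ∑ x ∈ Df, ((χ x : Kˣ) : K) := by
    intro χ
    obtain ⟨q, hq⟩ := hrat χ
    rw [hq]
    exact map_ratCast _ q
  -- injectivity of `x ↦ x ^ t`
  have hinj : ∀ x y : G, x ^ t = y ^ t → x = y := by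
    intro x y hxy
    have h1 : (x * y⁻¹) ^ t = 1 := by
      rw [mul_pow, inv_pow, hxy, mul_inv_cancel]
    have h2 : orderOf (x * y⁻¹) ∣ Nat.gcd t (Monoid.exponent G) :=
      Nat.dvd_gcd (orderOf_dvd_of_pow_eq_one h1) (Monoid.order_dvd_exponent _)
    rw [htcop] at h2
    rw [← mul_inv_eq_one]
    exact orderOf_eq_one_iff.mp (Nat.dvd_one.mp h2)
  -- the image of Df under `x ↦ x ^ t` has the same character sums, hence equals Df
  set Df' : Finset G := Df.image (· ^ t) with hDf'
  have hFourier : ∀ χ : G →* Kˣ, ∑ x ∈ Df', ((χ x : Kˣ) : K) = ∑ x ∈ Df, ((χ x : Kˣ) : K) := by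
    intro χ
    rw [hDf', Finset.sum_image (fun x _ y _ h => hinj x y h)]
    have hcongr : ∀ x ∈ Df, ((χ (x ^ t) : Kˣ) : K) = ((χ x : Kˣ) : K) ^ t := fun x _ => by
      rw [map_pow, Units.val_pow_eq_pow_val]
    rw [Finset.sum_congr rfl hcongr]
    have hτS := hfix χ
    rw [map_sum] at hτS
    rw [← hτS]
    refine Finset.sum_congr rfl fun x hx => ?_
    refine (hτpow _ ?_).symm
    rw [← Units.val_pow_eq_pow_val, ← map_pow, Monoid.pow_exponent_eq_one, map_one, Units.val_one]
  have hDD : Df' = Df := finset_eq_of_charSums_eq' hsep hcard Df' Df hFourier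
  have hgt : g ^ t ∈ Df ↔ g ∈ Df := by
    constructor
    · intro h
      rw [← hDD, hDf'] at h
      obtain ⟨x, hx, hxt⟩ := Finset.mem_image.mp h
      rw [← hinj x g hxt]
      exact hx
    · intro h
      rw [← hDD, hDf']
      exact Finset.mem_image_of_mem _ h
  rw [← hmemDf g, ← hmemDf (g ^ s), ← hts, hgt]
end

section
/- Let D be a regular (v,k,λ,μ)-partial difference set in a finite abelian group G, let N be a subgroup of G, and set k₁ = |N ∩ D|. For each coset C of N in G write B_C = |C ∩ D|. Then (1) the sum of B_C over all cosets C of N equals k, and (2) the sum of B_C(B_C − 1) over all cosets C of N equals k₁·λ + (|N| − 1 − k₁)·μ. -/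
/-- coset counts: let `D` be a regular `(v,k,λ,μ)` PDS in a finite abelian
group `G`, `N ≤ G` a subgroup and `k₁ = |N ∩ D|`.  For a coset `C` of `N` write
`B_C = |C ∩ D|`.  Then `∑_C B_C = k` and `∑_C B_C(B_C - 1) = k₁λ + (|N|-1-k₁)μ`. -/
theorem pds_coset_counts
    (G : Type*) [CommGroup G] [Fintype G] (v k lam mu : ℕ) (D : Set G)
    (hpds : IsPDS D v k lam mu) (hreg : IsRegularPDS D)
    (N : Subgroup G) (k₁ : ℕ) (hk₁ : k₁ = ((N : Set G) ∩ D).ncard)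
    (B : G ⧸ N → ℕ)
    (hB : ∀ C : G ⧸ N, B C = {g : G | g ∈ D ∧ (g : G ⧸ N) = C}.ncard) :
    (∑ᶠ C : G ⧸ N, B C) = k ∧
    (∑ᶠ C : G ⧸ N, B C * (B C - 1)) = k₁ * lam + (Nat.card N - 1 - k₁) * mu := by
  classical
  obtain ⟨hv, hk, hlam, hmu⟩ := hpds
  obtain ⟨h1D, hinv⟩ := hreg
  set Df : Finset G := D.toFinset with hDf
  have hDcard : Df.card = k := by rw [← hk, Set.ncard_eq_toFinset_card']
  have hBfin : ∀ C : G ⧸ N, B C = (Df.filter (fun g : G => (g : G ⧸ N) = C)).card := by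
    intro C
    rw [hB, Set.ncard_eq_toFinset_card']
    congr 1
    ext g
    simp [hDf]
  have part1 : (∑ᶠ C : G ⧸ N, B C) = k := by
    rw [finsum_eq_sum_of_fintype, ← hDcard,
      Finset.card_eq_sum_card_fiberwise
        (f := fun g : G => (g : G ⧸ N)) (s := Df) (t := Finset.univ)
        (fun x _ => Finset.mem_univ _)]
    exact Finset.sum_congr rfl (fun C _ => hBfin C)
  refine ⟨part1, ?_⟩
  -- the set of ordered pairs of distinct elements of D in the same coset
  set P : Finset (G × G) :=
    (Df ×ˢ Df).filter (fun p => p.1 ≠ p.2 ∧ ((p.1 : G ⧸ N) = (p.2 : G ⧸ N))) with hP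
  have hmemP : ∀ p : G × G,
      p ∈ P ↔ p.1 ∈ D ∧ p.2 ∈ D ∧ p.1 ≠ p.2 ∧ p.1 * p.2⁻¹ ∈ N := by
    intro p
    have : ((p.1 : G ⧸ N) = (p.2 : G ⧸ N)) ↔ p.1 * p.2⁻¹ ∈ N := by
      rw [QuotientGroup.eq]
      constructor
      · intro h
        have := N.inv_mem h
        rwa [mul_inv_rev, inv_inv, mul_comm] at this
      · intro h
        have := N.inv_mem h
        rwa [mul_inv_rev, inv_inv, mul_comm] at this
    simp only [hP, Finset.mem_filter, Finset.mem_product, hDf, Set.mem_toFinset, this]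
    tauto
  -- LHS: sum over cosets
  have stepA : (∑ᶠ C : G ⧸ N, B C * (B C - 1)) = P.card := by
    rw [finsum_eq_sum_of_fintype]
    rw [Finset.card_eq_sum_card_fiberwise
        (f := fun p : G × G => (p.1 : G ⧸ N)) (s := P) (t := Finset.univ)
        (fun x _ => Finset.mem_univ _)]
    refine Finset.sum_congr rfl (fun C _ => ?_)
    have hfib : P.filter (fun p => (p.1 : G ⧸ N) = C)
        = (Df.filter (fun g : G => (g : G ⧸ N) = C)).offDiag := by
      ext p
      simp only [Finset.mem_filter, Finset.mem_offDiag, hP, Finset.mem_product]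
      constructor
      · rintro ⟨⟨⟨h1, h2⟩, hne, heq⟩, hC⟩
        exact ⟨⟨h1, hC⟩, ⟨h2, heq ▸ hC⟩, hne⟩
      · rintro ⟨⟨h1, hC1⟩, ⟨h2, hC2⟩, hne⟩
        exact ⟨⟨⟨h1, h2⟩, hne, hC1.trans hC2.symm⟩, hC1⟩
    rw [hfib, Finset.offDiag_card, hBfin C]
    rcases Nat.eq_zero_or_pos ((Df.filter (fun g : G => (g : G ⧸ N) = C)).card) with h | h
    · simp [h]
    · have key : ∀ n : ℕ, n * (n - 1) = n * n - n := by
        intro n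
        cases n with
        | zero => rfl
        | succ m => rw [Nat.succ_sub_one, Nat.mul_succ, Nat.add_sub_cancel]
      exact key _
  rw [stepA]
  -- RHS: sum over elements of N
  set Nf : Finset G := (N : Set G).toFinset with hNf
  have hmemNf : ∀ z : G, z ∈ Nf ↔ z ∈ N := by intro z; simp [hNf]
  have stepB : P.card = ∑ z ∈ Nf, (P.filter (fun p => p.1 * p.2⁻¹ = z)).card := by
    exact Finset.card_eq_sum_card_fiberwise
      (f := fun p : G × G => p.1 * p.2⁻¹) (s := P) (t := Nf)
      (fun p hp => (hmemNf _).2 ((hmemP p).1 hp).2.2.2)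
  have hfibcard : ∀ z : G, z ∈ N → z ≠ 1 →
      (P.filter (fun p => p.1 * p.2⁻¹ = z)).card
        = {p : G × G | p.1 ∈ D ∧ p.2 ∈ D ∧ p.1 ≠ p.2 ∧ p.1 * p.2⁻¹ = z}.ncard := by
    intro z hzN hz1
    rw [Set.ncard_eq_toFinset_card']
    congr 1
    ext p
    simp only [Finset.mem_filter, Set.mem_toFinset, Set.mem_setOf_eq]
    rw [hmemP]
    constructor
    · tauto
    · rintro ⟨h1, h2, h3, h4⟩
      exact ⟨⟨h1, h2, h3, h4 ▸ hzN⟩, h4⟩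
  have h1N : (1 : G) ∈ Nf := (hmemNf 1).2 N.one_mem
  have hfib1 : (P.filter (fun p => p.1 * p.2⁻¹ = (1 : G))).card = 0 := by
    rw [Finset.card_eq_zero]
    ext p
    simp only [Finset.mem_filter, Finset.notMem_empty, iff_false, not_and]
    intro hp h
    exact ((hmemP p).1 hp).2.2.1 (by rwa [mul_inv_eq_one] at h)
  rw [stepB, ← Finset.add_sum_erase _ _ h1N, hfib1, zero_add]
  have hval : ∀ z ∈ Nf.erase 1,
      (P.filter (fun p => p.1 * p.2⁻¹ = z)).card = if z ∈ D then lam else mu := by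
    intro z hz
    obtain ⟨hz1, hzN⟩ := Finset.mem_erase.1 hz
    rw [hfibcard z ((hmemNf z).1 hzN) hz1]
    by_cases hzD : z ∈ D
    · rw [if_pos hzD]; exact hlam z hz1 hzD
    · rw [if_neg hzD]; exact hmu z hz1 hzD
  rw [Finset.sum_congr rfl hval]
  rw [Finset.sum_ite]
  simp only [Finset.sum_const, smul_eq_mul]
  have hcard1 : ((Nf.erase 1).filter (fun z => z ∈ D)).card = k₁ := by
    rw [hk₁, Set.ncard_eq_toFinset_card']
    congr 1
    ext z
    simp only [Finset.mem_filter, Finset.mem_erase, Set.mem_toFinset, Set.mem_inter_iff,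
      SetLike.mem_coe]
    constructor
    · rintro ⟨⟨_, hN⟩, hD⟩; exact ⟨(hmemNf z).1 hN, hD⟩
    · rintro ⟨hN, hD⟩
      refine ⟨⟨?_, (hmemNf z).2 hN⟩, hD⟩
      rintro rfl; exact h1D hD
  have hNcard : Nf.card = Nat.card N := by
    have h2 : Nat.card N = ((N : Set G)).ncard := Nat.card_coe_set_eq _
    rw [h2, Set.ncard_eq_toFinset_card']
  have hcard2 : ((Nf.erase 1).filter (fun z => ¬ z ∈ D)).card
      = Nat.card N - 1 - k₁ := by
    have hsplit := Finset.card_filter_add_card_filter_not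
      (s := Nf.erase 1) (p := fun z => z ∈ D)
    rw [hcard1] at hsplit
    have herase : (Nf.erase 1).card = Nat.card N - 1 := by
      rw [Finset.card_erase_of_mem h1N, hNcard]
    omega
  rw [hcard1, hcard2]
end
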